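/- arXiv:1901.08390 — 5 statements merged into one kernel-verified Lean document; each statement's English description precedes it below -/
import Mathlib

section
/- Let N ≥ 2 be an integer and let x₀ lie in the interior of C_N^D. Then there exists a unique continuously differentiable function φ : [0,∞) → ℝ^N with φ(0) = x₀ such that φ(t) lies in the interior of C_N^D for every t ≥ 0 and φ solves the ODE of type D_N, i.e. φ_i'(t) = ∑_{j≠i} ( 1/(φ_i(t) − φ_j(t)) + 1/(φ_i(t) + φ_j(t)) ) for all i = 1,…,N and all t ≥ 0. -/
open scoped BigOperators

noncomputable section

/-- The interior of the closed Weyl chamber of type D,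
`C_N^D = {x : x_1 ≥ … ≥ x_{N-1} ≥ |x_N|}`: it consists of the `x` with
`x_1 > x_2 > … > x_{N-1} > |x_N|`. -/
def interiorD {N : ℕ} (x : Fin N → ℝ) : Prop :=
  StrictAnti (fun j : Fin N => if (j : ℕ) = N - 1 then |x j| else x j)

/-- `φ` solves the ODE of type `D_N`,
`dx_i/dt = ∑_{j≠i} (1/(x_i - x_j) + 1/(x_i + x_j))`, on `[0,∞)`. -/
def solvesD {N : ℕ} (φ : ℝ → Fin N → ℝ) : Prop :=
  ∀ t ∈ Set.Ici (0:ℝ), ∀ i : Fin N,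
    HasDerivWithinAt (fun s => φ s i)
      (∑ j ∈ Finset.univ.erase i,
        (1 / (φ t i - φ t j) + 1 / (φ t i + φ t j)))
      (Set.Ici 0) t

namespace Stmt13

open Set Metric Finset

variable {N : ℕ}

/-- The vector field of the type `D_N` ODE. -/
def vf (N : ℕ) (x : Fin N → ℝ) : Fin N → ℝ :=
  fun i => ∑ j ∈ Finset.univ.erase i, (1 / (x i - x j) + 1 / (x i + x j))

/-- The interior of the Weyl chamber, described by pairwise inequalities. -/
def dom (N : ℕ) : Set (Fin N → ℝ) :=
  {x | ∀ i j : Fin N, i < j → x j < x i ∧ 0 < x i + x j}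

lemma isOpen_dom : IsOpen (dom N) := by
  have : dom N = ⋂ (i : Fin N) (j : Fin N),
      {x : Fin N → ℝ | i < j → x j < x i ∧ 0 < x i + x j} := by
    ext x; simp [dom, Set.mem_iInter]
  rw [this]
  refine isOpen_iInter_of_finite fun i => isOpen_iInter_of_finite fun j => ?_
  by_cases hij : i < j
  · simp only [hij, true_implies]
    exact (isOpen_lt (continuous_apply j) (continuous_apply i)).inter
      (isOpen_lt continuous_const ((continuous_apply i).add (continuous_apply j)))
  · simp only [hij, false_implies, Set.setOf_true, isOpen_univ]

lemma convex_dom : Convex ℝ (dom N) := by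
  intro x hx y hy a b ha hb hab
  intro i j hij
  obtain ⟨h1, h2⟩ := hx i j hij
  obtain ⟨h3, h4⟩ := hy i j hij
  have hax : a • x + b • y = fun k => a * x k + b * y k := rfl
  constructor
  · show a * x j + b * y j < a * x i + b * y i
    rcases eq_or_lt_of_le ha with ha' | ha'
    · have hb1 : b = 1 := by linarith
      simpa [← ha', hb1] using h3
    · have : a * x j < a * x i := by exact (mul_lt_mul_iff_right₀ ha').2 h1
      nlinarith [mul_le_mul_of_nonneg_left h3.le hb]
  · show 0 < (a * x i + b * y i) + (a * x j + b * y j)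
    rcases eq_or_lt_of_le ha with ha' | ha'
    · have hb1 : b = 1 := by linarith
      rw [← ha', hb1]; simpa using h4
    · nlinarith [mul_nonneg hb h4.le, mul_pos ha' h2]

lemma dom_ne {x : Fin N → ℝ} (hx : x ∈ dom N) {i j : Fin N} (hij : i ≠ j) :
    x i - x j ≠ 0 ∧ x i + x j ≠ 0 := by
  rcases lt_or_gt_of_ne hij with h | h
  · obtain ⟨h1, h2⟩ := hx i j h
    exact ⟨sub_ne_zero_of_ne h1.ne', h2.ne'⟩
  · obtain ⟨h1, h2⟩ := hx j i h
    refine ⟨sub_ne_zero_of_ne h1.ne, ?_⟩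
    rw [add_comm]; exact h2.ne' 

lemma interiorD_iff (hN : 2 ≤ N) {x : Fin N → ℝ} : interiorD x ↔ x ∈ dom N := by
  constructor
  · intro h i j hij
    have hiv : (i : ℕ) ≠ N - 1 := by
      have := hij; rw [Fin.lt_def] at this
      have hj := j.isLt; omega
    have hmj : (if (j:ℕ) = N - 1 then |x j| else x j)
        < (if (i:ℕ) = N - 1 then |x i| else x i) := h hij
    rw [if_neg hiv] at hmj
    by_cases hjv : (j : ℕ) = N - 1
    · rw [if_pos hjv] at hmj
      obtain ⟨hl, hr⟩ := abs_lt.1 hmj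
      exact ⟨hr, by linarith⟩
    · rw [if_neg hjv] at hmj
      refine ⟨hmj, ?_⟩
      set ℓ : Fin N := ⟨N - 1, by omega⟩ with hℓ
      have hjℓ : j < ℓ := by
        rw [Fin.lt_def]
        have := j.isLt; simp [hℓ]; omega
      have hmℓ : (if (ℓ:ℕ) = N - 1 then |x ℓ| else x ℓ)
          < (if (j:ℕ) = N - 1 then |x j| else x j) := h hjℓ
      rw [if_neg hjv, if_pos rfl] at hmℓ
      have h0 : 0 ≤ |x ℓ| := abs_nonneg _
      linarith
  · intro h a b hab
    have hav : (a : ℕ) ≠ N - 1 := by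
      have := hab; rw [Fin.lt_def] at this
      have hb := b.isLt; omega
    show (if (b:ℕ) = N - 1 then |x b| else x b) < (if (a:ℕ) = N - 1 then |x a| else x a)
    rw [if_neg hav]
    obtain ⟨h1, h2⟩ := h a b hab
    by_cases hbv : (b : ℕ) = N - 1
    · rw [if_pos hbv]
      exact abs_lt.2 ⟨by linarith, h1⟩
    · rw [if_neg hbv]; exact h1

lemma contDiffAt_vf {x : Fin N → ℝ} (hx : x ∈ dom N) : ContDiffAt ℝ 1 (vf N) x := by
  rw [show vf N = fun y (i : Fin N) => ∑ j ∈ Finset.univ.erase i,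
      (1 / (y i - y j) + 1 / (y i + y j)) from rfl, contDiffAt_pi]
  intro i
  refine ContDiffAt.sum fun j hj => ?_
  have hij : i ≠ j := (Finset.ne_of_mem_erase hj).symm
  obtain ⟨hd, hs⟩ := dom_ne hx hij
  have hci : ContDiffAt ℝ 1 (fun y : Fin N → ℝ => y i) x := (contDiff_apply ℝ ℝ i).contDiffAt
  have hcj : ContDiffAt ℝ 1 (fun y : Fin N → ℝ => y j) x := (contDiff_apply ℝ ℝ j).contDiffAt
  simp only [one_div]
  exact ((hci.sub hcj).inv hd).add ((hci.add hcj).inv hs)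

/-- A `C¹` map on an open set is Lipschitz on any compact subset. -/
lemma lipschitzOnWith_of_compact {E F : Type*} [NormedAddCommGroup E] [NormedSpace ℝ E]
    [ProperSpace E] [NormedAddCommGroup F] [NormedSpace ℝ F] {f : E → F} {K U : Set E}
    (hK : IsCompact K) (hU : IsOpen U) (hKU : K ⊆ U) (hconv : Convex ℝ U)
    (hf : ∀ x ∈ U, ContDiffAt ℝ 1 f x) : ∃ L : NNReal, LipschitzOnWith L f K := by
  rcases K.eq_empty_or_nonempty with hKe | hKne
  · exact ⟨1, hKe ▸ lipschitzOnWith_empty 1 f⟩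
  obtain ⟨δ, hδ, hthick⟩ := hK.exists_thickening_subset_open hU hKU
  set K' := Metric.cthickening (δ / 2) K with hK'def
  have hK'c : IsCompact K' := hK.cthickening
  have hK'U : K' ⊆ U :=
    (Metric.cthickening_subset_thickening' hδ (by linarith) K).trans hthick
  have hKK' : K ⊆ K' := Metric.self_subset_cthickening K
  have hcf : ContinuousOn f U := fun x hx => (hf x hx).continuousAt.continuousWithinAt
  have hcont : ContDiffOn ℝ 1 f U := fun x hx => (hf x hx).contDiffWithinAt
  have hfd : ContinuousOn (fderiv ℝ f) U := hcont.continuousOn_fderiv_of_isOpen hU le_rfl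
  obtain ⟨C, hC⟩ := hK'c.exists_bound_of_continuousOn (hcf.mono hK'U)
  obtain ⟨M, hM⟩ := hK'c.exists_bound_of_continuousOn (hfd.mono hK'U)
  obtain ⟨z, hz⟩ := hKne
  have hz' : z ∈ K' := hKK' hz
  have hM0 : 0 ≤ M := le_trans (norm_nonneg _) (hM z hz')
  have hC0 : 0 ≤ C := le_trans (norm_nonneg _) (hC z hz')
  have hball : ∀ x ∈ K, ∀ y₁ ∈ Metric.closedBall x (δ / 2), ∀ y₂ ∈ Metric.closedBall x (δ / 2),
      dist (f y₁) (f y₂) ≤ M * dist y₁ y₂ := by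
    intro x hx
    have hsub : Metric.closedBall x (δ / 2) ⊆ K' := Metric.closedBall_subset_cthickening hx _
    have hlip : LipschitzOnWith (Real.toNNReal M) f (Metric.closedBall x (δ / 2)) := by
      refine Convex.lipschitzOnWith_of_nnnorm_hasFDerivWithin_le (f' := fderiv ℝ f)
        (fun y hy => ?_) (fun y hy => ?_) (convex_closedBall _ _)
      · exact ((hf y (hK'U (hsub hy))).differentiableAt one_ne_zero).hasFDerivAt.hasFDerivWithinAt
      · have h1 := hM y (hsub hy)
        rw [← Real.coe_toNNReal M hM0, ← coe_nnnorm, NNReal.coe_le_coe] at h1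
        exact h1
    intro y₁ hy₁ y₂ hy₂
    have := lipschitzOnWith_iff_dist_le_mul.1 hlip y₁ hy₁ y₂ hy₂
    calc dist (f y₁) (f y₂) ≤ (Real.toNNReal M : ℝ) * dist y₁ y₂ := this
      _ = M * dist y₁ y₂ := by rw [Real.coe_toNNReal M hM0]
  refine ⟨Real.toNNReal (max M (2 * C / (δ / 2))), lipschitzOnWith_iff_dist_le_mul.2 ?_⟩
  have hLmax : 0 ≤ max M (2 * C / (δ / 2)) := le_max_of_le_left hM0
  have hLcoe : (Real.toNNReal (max M (2 * C / (δ / 2))) : ℝ) = max M (2 * C / (δ / 2)) :=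
    Real.coe_toNNReal _ hLmax
  intro x hx y hy
  rw [hLcoe]
  rcases le_or_gt (dist x y) (δ / 2) with hd | hd
  · have h1 := hball x hx x (Metric.mem_closedBall_self (by positivity)) y
      (by rwa [Metric.mem_closedBall, dist_comm])
    calc dist (f x) (f y) ≤ M * dist x y := h1
      _ ≤ max M (2 * C / (δ / 2)) * dist x y :=
        mul_le_mul_of_nonneg_right (le_max_left _ _) dist_nonneg
  · have h1 : dist (f x) (f y) ≤ 2 * C := by
      rw [dist_eq_norm]
      calc ‖f x - f y‖ ≤ ‖f x‖ + ‖f y‖ := norm_sub_le _ _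
        _ ≤ C + C := add_le_add (hC _ (hKK' hx)) (hC _ (hKK' hy))
        _ = 2 * C := by ring
    have h2 : 2 * C ≤ 2 * C / (δ / 2) * dist x y := by
      rw [div_mul_eq_mul_div, le_div_iff₀ (by positivity)]
      have : 0 ≤ 2 * C := by positivity
      nlinarith
    calc dist (f x) (f y) ≤ 2 * C / (δ / 2) * dist x y := le_trans h1 h2
      _ ≤ max M (2 * C / (δ / 2)) * dist x y :=
        mul_le_mul_of_nonneg_right (le_max_right _ _) dist_nonneg

/-- Solution on `[0, b]` staying in the chamber interior. -/
def sol (N : ℕ) (x₀ : Fin N → ℝ) (b : ℝ) (f : ℝ → Fin N → ℝ) : Prop :=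
  f 0 = x₀ ∧ (∀ t ∈ Icc (0:ℝ) b, f t ∈ dom N) ∧
    ∀ t ∈ Icc (0:ℝ) b, HasDerivWithinAt f (vf N (f t)) (Icc (0:ℝ) b) t

lemma sol.continuousOn {x₀ : Fin N → ℝ} {b : ℝ} {f : ℝ → Fin N → ℝ} (hf : sol N x₀ b f) :
    ContinuousOn f (Icc (0:ℝ) b) :=
  fun t ht => (hf.2.2 t ht).continuousWithinAt

lemma sol.mono {x₀ : Fin N → ℝ} {b c : ℝ} {f : ℝ → Fin N → ℝ} (hf : sol N x₀ b f)
    (hc : 0 ≤ c) (hcb : c ≤ b) : sol N x₀ c f :=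
  ⟨hf.1, fun t ht => hf.2.1 t ⟨ht.1, ht.2.trans hcb⟩,
    fun t ht => (hf.2.2 t ⟨ht.1, ht.2.trans hcb⟩).mono (Set.Icc_subset_Icc_right hcb)⟩

lemma sol.congr {x₀ : Fin N → ℝ} {b : ℝ} {f g : ℝ → Fin N → ℝ} (hf : sol N x₀ b f)
    (hb : 0 ≤ b) (h : EqOn f g (Icc (0:ℝ) b)) : sol N x₀ b g := by
  have h0 : g 0 = x₀ := by rw [← h (Set.left_mem_Icc.2 hb)]; exact hf.1
  refine ⟨h0, fun t ht => h ht ▸ hf.2.1 t ht, fun t ht => ?_⟩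
  have := (hf.2.2 t ht).congr (fun y hy => (h hy).symm) (h ht).symm
  rwa [h ht] at this

/-- Uniqueness of solutions. -/
lemma sol_unique {x₀ : Fin N → ℝ} {b : ℝ} {f g : ℝ → Fin N → ℝ} (hb : 0 ≤ b)
    (hf : sol N x₀ b f) (hg : sol N x₀ b g) : EqOn f g (Icc (0:ℝ) b) := by
  set K : Set (Fin N → ℝ) := f '' Icc 0 b ∪ g '' Icc 0 b with hK
  have hKc : IsCompact K :=
    (isCompact_Icc.image_of_continuousOn hf.continuousOn).union
      (isCompact_Icc.image_of_continuousOn hg.continuousOn)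
  have hKD : K ⊆ dom N := by
    rintro y (⟨t, ht, rfl⟩ | ⟨t, ht, rfl⟩)
    exacts [hf.2.1 t ht, hg.2.1 t ht]
  obtain ⟨L, hL⟩ := lipschitzOnWith_of_compact hKc isOpen_dom hKD convex_dom
    (fun x hx => contDiffAt_vf hx)
  refine ODE_solution_unique_of_mem_Icc_right (v := fun _ => vf N) (s := fun _ => K) (K := L)
    (fun _ _ => hL) hf.continuousOn (fun t ht => ?_) (fun t ht => Or.inl ⟨t, Ico_subset_Icc_self ht, rfl⟩)
    hg.continuousOn (fun t ht => ?_) (fun t ht => Or.inr ⟨t, Ico_subset_Icc_self ht, rfl⟩)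
    (hf.1.trans hg.1.symm)
  · exact (hf.2.2 t (Ico_subset_Icc_self ht)).mono_of_mem_nhdsWithin (Icc_mem_nhdsGE_of_mem ht)
  · exact (hg.2.2 t (Ico_subset_Icc_self ht)).mono_of_mem_nhdsWithin (Icc_mem_nhdsGE_of_mem ht)

/-- Index-swap identity for double sums over distinct pairs. -/
lemma sum_swap_erase (g : Fin N → Fin N → ℝ) :
    ∑ i : Fin N, ∑ j ∈ Finset.univ.erase i, g i j
      = ∑ i : Fin N, ∑ j ∈ Finset.univ.erase i, g j i := by
  exact Finset.sum_comm' fun a b => by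
    simp only [Finset.mem_erase, Finset.mem_univ, and_true, true_and]
    exact ⟨fun h => h.symm, fun h => h.symm⟩

/-- Key symmetrization identity. -/
lemma sum_pair_identity {x : Fin N → ℝ} (hx : x ∈ dom N) (w : Fin N → ℝ) :
    ∑ i : Fin N, ∑ j ∈ Finset.univ.erase i,
        ((w i - w j) / (x i - x j) + (w i + w j) / (x i + x j))
      = 2 * ∑ i : Fin N, w i * vf N x i := by
  have h1 : (∑ i : Fin N, ∑ j ∈ Finset.univ.erase i,
        ((w i - w j) / (x i - x j) + (w i + w j) / (x i + x j)))
      = (∑ i : Fin N, ∑ j ∈ Finset.univ.erase i,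
          (w i / (x i - x j) + w i / (x i + x j)))
        + ∑ i : Fin N, ∑ j ∈ Finset.univ.erase i,
            (-(w j) / (x i - x j) + w j / (x i + x j)) := by
    rw [← Finset.sum_add_distrib]
    refine Finset.sum_congr rfl fun i _ => ?_
    rw [← Finset.sum_add_distrib]
    exact Finset.sum_congr rfl fun j _ => by ring
  have h2 : ∑ i : Fin N, ∑ j ∈ Finset.univ.erase i,
        (-(w j) / (x i - x j) + w j / (x i + x j))
      = ∑ i : Fin N, ∑ j ∈ Finset.univ.erase i,
          (w i / (x i - x j) + w i / (x i + x j)) := by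
    rw [sum_swap_erase (fun i j => -(w j) / (x i - x j) + w j / (x i + x j))]
    refine Finset.sum_congr rfl fun i _ => Finset.sum_congr rfl fun j _ => ?_
    rw [show x j - x i = -(x i - x j) by ring, show x j + x i = x i + x j by ring,
      neg_div_neg_eq]
  have h3 : ∑ i : Fin N, ∑ j ∈ Finset.univ.erase i,
        (w i / (x i - x j) + w i / (x i + x j))
      = ∑ i : Fin N, w i * vf N x i := by
    refine Finset.sum_congr rfl fun i _ => ?_
    simp only [vf, Finset.mul_sum]
    exact Finset.sum_congr rfl fun j _ => by ring
  rw [h1, h2, h3]; ring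

/-- The exact evolution rate of `∑ xᵢ²`. -/
lemma sum_mul_vf (hN1 : 1 ≤ N) {x : Fin N → ℝ} (hx : x ∈ dom N) :
    ∑ i : Fin N, x i * vf N x i = (N : ℝ) * (N - 1) := by
  have h := sum_pair_identity hx x
  have h2 : ∑ i : Fin N, ∑ j ∈ Finset.univ.erase i,
        ((x i - x j) / (x i - x j) + (x i + x j) / (x i + x j))
      = ∑ i : Fin N, ∑ j ∈ Finset.univ.erase i, (2:ℝ) := by
    refine Finset.sum_congr rfl fun i _ => Finset.sum_congr rfl fun j hj => ?_
    obtain ⟨hd, hs⟩ := dom_ne hx (Finset.mem_erase.1 hj).1.symm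
    rw [div_self hd, div_self hs]; norm_num
  have h3 : ∑ i : Fin N, ∑ j ∈ Finset.univ.erase i, (2:ℝ)
      = (N:ℝ) * (((N - 1 : ℕ)):ℝ) * 2 := by
    have hin : ∀ i : Fin N, ∑ _j ∈ Finset.univ.erase i, (2:ℝ)
        = ((N - 1 : ℕ):ℝ) * 2 := by
      intro i
      rw [Finset.sum_const, Finset.card_erase_of_mem (Finset.mem_univ i),
        Finset.card_univ, Fintype.card_fin, nsmul_eq_mul]
    rw [Finset.sum_congr rfl fun i _ => hin i, Finset.sum_const, Finset.card_univ,
      Fintype.card_fin, nsmul_eq_mul]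
    ring
  have hcast : ((N - 1 : ℕ):ℝ) = (N:ℝ) - 1 := by
    have := Nat.cast_sub (R := ℝ) hN1
    simpa using this
  rw [h2, h3, hcast] at h
  linarith

/-- The logarithmic quantity which is monotone along the flow. -/
def lyap (N : ℕ) (x : Fin N → ℝ) : ℝ :=
  ∑ i : Fin N, ∑ j ∈ Finset.univ.erase i,
    (Real.log (x i - x j) + Real.log (x i + x j))

lemma apriori_sq {x₀ : Fin N → ℝ} {b : ℝ} {f : ℝ → Fin N → ℝ} (hf : sol N x₀ b f) :
    ∀ t ∈ Icc (0:ℝ) b, ∑ i : Fin N, (f t i) ^ 2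
      = (∑ i : Fin N, (x₀ i) ^ 2) + 2 * ((N : ℝ) * (N - 1)) * t := by
  rcases lt_or_ge b 0 with hb | hb
  · intro t ht; exact absurd (ht.1.trans ht.2) (not_le.2 hb)
  rcases Nat.eq_zero_or_pos N with hN0 | hN1
  · intro t ht; subst hN0; simp
  set q : ℝ → ℝ := fun t => (∑ i : Fin N, (f t i) ^ 2) - 2 * ((N:ℝ) * (N - 1)) * t with hq
  have hder : ∀ t ∈ Ico (0:ℝ) b, HasDerivWithinAt q 0 (Ici t) t := by
    intro t ht
    have hv : HasDerivWithinAt f (vf N (f t)) (Ici t) t :=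
      (hf.2.2 t (Ico_subset_Icc_self ht)).mono_of_mem_nhdsWithin (Icc_mem_nhdsGE_of_mem ht)
    have hco : ∀ i, HasDerivWithinAt (fun s => f s i) (vf N (f t) i) (Ici t) t :=
      fun i => hasDerivWithinAt_pi.1 hv i
    have hsum : HasDerivWithinAt (fun s => ∑ i : Fin N, (f s i) ^ 2)
        (∑ i : Fin N, 2 * f t i * vf N (f t) i) (Ici t) t := by
      refine HasDerivWithinAt.fun_sum fun i _ => ?_
      have h2 := (hco i).fun_pow 2
      refine h2.congr_deriv ?_
      push_cast
      ring
    have h1 : ∑ i : Fin N, 2 * f t i * vf N (f t) i = 2 * ((N:ℝ) * (N - 1)) := by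
      have hid := sum_mul_vf hN1 (hf.2.1 t (Ico_subset_Icc_self ht))
      calc ∑ i : Fin N, 2 * f t i * vf N (f t) i
          = 2 * ∑ i : Fin N, f t i * vf N (f t) i := by
            rw [Finset.mul_sum]; exact Finset.sum_congr rfl fun i _ => by ring
        _ = 2 * ((N:ℝ) * (N - 1)) := by rw [hid]
    have hlin : HasDerivWithinAt (fun s : ℝ => 2 * ((N:ℝ) * (N - 1)) * s)
        (2 * ((N:ℝ) * (N - 1))) (Ici t) t := by
      simpa using ((hasDerivAt_id t).const_mul (2 * ((N:ℝ) * (N - 1)))).hasDerivWithinAt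
    have := (h1 ▸ hsum).fun_sub hlin
    simpa using this
  have hcont : ContinuousOn q (Icc (0:ℝ) b) := by
    refine ContinuousOn.sub ?_ (Continuous.continuousOn (by continuity))
    refine continuousOn_finset_sum _ fun i _ => ?_
    exact ((continuous_apply i).comp_continuousOn hf.continuousOn).pow 2
  have hconst := constant_of_has_deriv_right_zero hcont hder
  intro t ht
  have h0 : q t = q 0 := hconst t ht
  have hq0 : q 0 = ∑ i : Fin N, (x₀ i) ^ 2 := by simp [hq, hf.1]
  have hqt : q t = (∑ i : Fin N, (f t i) ^ 2) - 2 * ((N:ℝ) * (N - 1)) * t := rfl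
  rw [hqt, hq0] at h0
  linarith

lemma apriori_lyap {x₀ : Fin N → ℝ} {b : ℝ} {f : ℝ → Fin N → ℝ} (hf : sol N x₀ b f) :
    ∀ t ∈ Icc (0:ℝ) b, lyap N x₀ ≤ lyap N (f t) := by
  rcases lt_or_ge b 0 with hb | hb
  · intro t ht; exact absurd (ht.1.trans ht.2) (not_le.2 hb)
  have hld : ∀ t ∈ Ioo (0:ℝ) b, HasDerivAt (fun s => lyap N (f s))
      (∑ i : Fin N, ∑ j ∈ Finset.univ.erase i,
        ((vf N (f t) i - vf N (f t) j) / (f t i - f t j)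
          + (vf N (f t) i + vf N (f t) j) / (f t i + f t j))) t := by
    intro t ht
    have htIcc : t ∈ Icc (0:ℝ) b := Ioo_subset_Icc_self ht
    have hvt : HasDerivAt f (vf N (f t)) t :=
      (hf.2.2 t htIcc).hasDerivAt (Icc_mem_nhds ht.1 ht.2)
    have hco : ∀ i, HasDerivAt (fun s => f s i) (vf N (f t) i) t :=
      fun i => hasDerivAt_pi.1 hvt i
    have hD := hf.2.1 t htIcc
    refine HasDerivAt.fun_sum fun i _ => HasDerivAt.fun_sum fun j hj => ?_
    obtain ⟨hd, hs⟩ := dom_ne hD (Finset.mem_erase.1 hj).1.symm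
    exact (((hco i).sub (hco j)).log hd).add (((hco i).add (hco j)).log hs)
  have hmono : MonotoneOn (fun t => lyap N (f t)) (Icc (0:ℝ) b) := by
    refine monotoneOn_of_deriv_nonneg (convex_Icc 0 b) ?_ ?_ ?_
    · refine continuousOn_finset_sum _ fun i _ => continuousOn_finset_sum _ fun j hj => ?_
      intro t ht
      obtain ⟨hd, hs⟩ := dom_ne (hf.2.1 t ht) (Finset.mem_erase.1 hj).1.symm
      have hfi : ContinuousWithinAt (fun s => f s i) (Icc (0:ℝ) b) t :=
        (continuous_apply i).continuousAt.comp_continuousWithinAt (hf.continuousOn t ht)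
      have hfj : ContinuousWithinAt (fun s => f s j) (Icc (0:ℝ) b) t :=
        (continuous_apply j).continuousAt.comp_continuousWithinAt (hf.continuousOn t ht)
      exact ((hfi.sub hfj).log hd).add ((hfi.add hfj).log hs)
    · rw [interior_Icc]
      exact fun t ht => (hld t ht).differentiableAt.differentiableWithinAt
    · rw [interior_Icc]
      intro t ht
      rw [(hld t ht).deriv]
      have hD := hf.2.1 t (Ioo_subset_Icc_self ht)
      rw [sum_pair_identity hD (vf N (f t))]
      have : (0:ℝ) ≤ ∑ i : Fin N, vf N (f t) i * vf N (f t) i :=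
        Finset.sum_nonneg fun i _ => mul_self_nonneg _
      linarith
  intro t ht
  have := hmono (left_mem_Icc.2 hb) ht ht.1
  simpa [hf.1] using this

/-- Extraction of a lower bound for a single log term from `lyap`. -/
lemma lyap_extract {x : Fin N → ℝ} (hx : x ∈ dom N) {c L₀ : ℝ} (hc : 0 ≤ c)
    (hL : L₀ ≤ lyap N x)
    (hterm : ∀ i j : Fin N, i ≠ j →
      Real.log (x i - x j) ≤ c ∧ Real.log (x i + x j) ≤ c) :
    ∀ i j : Fin N, i < j →
      L₀ - 2 * (N : ℝ) ^ 2 * c ≤ Real.log (x i - x j) ∧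
      L₀ - 2 * (N : ℝ) ^ 2 * c ≤ Real.log (x i + x j) := by
  intro i₀ j₀ hij
  have hN2 : 2 ≤ N := by
    have h1 := j₀.isLt
    have h2 : (i₀ : ℕ) < (j₀ : ℕ) := hij
    omega
  have hne : i₀ ≠ j₀ := ne_of_lt hij
  have hj₀ : j₀ ∈ Finset.univ.erase i₀ := Finset.mem_erase.2 ⟨hne.symm, Finset.mem_univ _⟩
  set A := fun (p q : Fin N) => Real.log (x p - x q) + Real.log (x p + x q) with hA
  have hSi : lyap N x = (∑ j' ∈ Finset.univ.erase i₀, A i₀ j')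
      + ∑ i' ∈ Finset.univ.erase i₀, ∑ j' ∈ Finset.univ.erase i', A i' j' :=
    (Finset.add_sum_erase _ _ (Finset.mem_univ i₀)).symm
  have hSj : ∑ j' ∈ Finset.univ.erase i₀, A i₀ j'
      = A i₀ j₀ + ∑ j' ∈ (Finset.univ.erase i₀).erase j₀, A i₀ j' :=
    (Finset.add_sum_erase _ _ hj₀).symm
  have hcard : ∀ k : Fin N, (Finset.univ.erase k).card = N - 1 := fun k => by
    rw [Finset.card_erase_of_mem (Finset.mem_univ k), Finset.card_univ, Fintype.card_fin]
  have hAle : ∀ p q : Fin N, p ≠ q → A p q ≤ 2 * c := by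
    intro p q h
    obtain ⟨h1, h2⟩ := hterm p q h
    simp only [hA]; linarith
  have hcast1 : ((N - 1 : ℕ):ℝ) = (N:ℝ) - 1 := by
    have := Nat.cast_sub (R := ℝ) (show 1 ≤ N by omega); simpa using this
  have hcast2 : ((N - 2 : ℕ):ℝ) = (N:ℝ) - 2 := by
    have := Nat.cast_sub (R := ℝ) hN2; simpa using this
  have houter : ∑ i' ∈ Finset.univ.erase i₀, ∑ j' ∈ Finset.univ.erase i', A i' j'
      ≤ ((N:ℝ) - 1) * (((N:ℝ) - 1) * (2 * c)) := by
    calc ∑ i' ∈ Finset.univ.erase i₀, ∑ j' ∈ Finset.univ.erase i', A i' j'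
        ≤ (Finset.univ.erase i₀).card • (((N:ℝ) - 1) * (2 * c)) := by
          refine Finset.sum_le_card_nsmul _ _ _ fun i' _ => ?_
          calc ∑ j' ∈ Finset.univ.erase i', A i' j'
              ≤ (Finset.univ.erase i').card • (2 * c) :=
                Finset.sum_le_card_nsmul _ _ _ fun j' hj' =>
                  hAle i' j' (Finset.mem_erase.1 hj').1.symm
            _ = ((N:ℝ) - 1) * (2 * c) := by rw [hcard, nsmul_eq_mul, hcast1]
      _ = ((N:ℝ) - 1) * (((N:ℝ) - 1) * (2 * c)) := by rw [hcard, nsmul_eq_mul, hcast1]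
  have hinner : ∑ j' ∈ (Finset.univ.erase i₀).erase j₀, A i₀ j' ≤ ((N:ℝ) - 2) * (2 * c) := by
    calc ∑ j' ∈ (Finset.univ.erase i₀).erase j₀, A i₀ j'
        ≤ ((Finset.univ.erase i₀).erase j₀).card • (2 * c) := by
          refine Finset.sum_le_card_nsmul _ _ _ fun j' hj' => ?_
          exact hAle i₀ j' (Finset.mem_erase.1 (Finset.mem_erase.1 hj').2).1.symm
      _ = ((N:ℝ) - 2) * (2 * c) := by
          rw [Finset.card_erase_of_mem hj₀, hcard, nsmul_eq_mul]
          rw [show N - 1 - 1 = N - 2 from by omega, hcast2]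
  obtain ⟨hb1, hb2⟩ := hterm i₀ j₀ hne
  have harith : ((N:ℝ) - 2) * (2 * c) + ((N:ℝ) - 1) * (((N:ℝ) - 1) * (2 * c)) + c
      ≤ 2 * (N:ℝ) ^ 2 * c := by
    nlinarith [mul_nonneg (show (0:ℝ) ≤ 2 * (N:ℝ) + 1 by positivity) hc]
  have hAval : A i₀ j₀ = Real.log (x i₀ - x j₀) + Real.log (x i₀ + x j₀) := rfl
  constructor
  · linarith [hL, hSi, hSj]
  · linarith [hL, hSi, hSj]

/-- Trajectories with locally bounded velocity stay in a ball. -/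
lemma bootstrap {E : Type*} [NormedAddCommGroup E] [NormedSpace ℝ E] {g : ℝ → E} {w : ℝ → E}
    {a b : ℝ} (hab : a ≤ b) {x : E} {r C : ℝ} (hr : 0 ≤ r) (hC : 0 ≤ C)
    (hd : ∀ t ∈ Icc a b, HasDerivWithinAt g (w t) (Icc a b) t)
    (hw : ∀ t ∈ Icc a b, g t ∈ Metric.closedBall x r → ‖w t‖ ≤ C)
    (hga : g a = x) (hlt : C * (b - a) < r) :
    ∀ t ∈ Icc a b, g t ∈ Metric.closedBall x r := by
  set S := {t | t ∈ Icc a b ∧ ∀ τ ∈ Ico a t, g τ ∈ Metric.closedBall x r} with hS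
  have haS : a ∈ S := ⟨left_mem_Icc.2 hab, fun τ hτ => ((hτ.1.trans_lt hτ.2).false).elim⟩
  have hbdd : BddAbove S := ⟨b, fun t ht => ht.1.2⟩
  set s' := sSup S with hs'
  have hs'le : s' ≤ b := csSup_le ⟨a, haS⟩ fun t ht => ht.1.2
  have has' : a ≤ s' := le_csSup hbdd haS
  have hs'S : s' ∈ S := by
    refine ⟨⟨has', hs'le⟩, fun τ hτ => ?_⟩
    obtain ⟨t, htS, hτt⟩ := exists_lt_of_lt_csSup ⟨a, haS⟩ hτ.2
    exact htS.2 τ ⟨hτ.1, hτt⟩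
  have hmvt : ∀ τ ∈ Icc a s', ‖g τ - g a‖ ≤ C * (τ - a) := by
    refine norm_image_sub_le_of_norm_deriv_le_segment'
      (fun τ hτ => (hd τ ⟨hτ.1, hτ.2.trans hs'le⟩).mono (Icc_subset_Icc_right hs'le))
      (fun τ hτ => hw τ ⟨hτ.1, hτ.2.le.trans hs'le⟩ (hs'S.2 τ hτ))
  have hball' : ∀ τ ∈ Icc a s', ‖g τ - x‖ < r := by
    intro τ hτ
    have h1 := hmvt τ hτ
    rw [hga] at h1
    have h2 : C * (τ - a) ≤ C * (b - a) :=
      mul_le_mul_of_nonneg_left (by linarith [hτ.2.trans hs'le]) hC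
    linarith
  have hsb : s' = b := by
    by_contra hsb
    have hs'b : s' < b := lt_of_le_of_ne hs'le hsb
    have hcont : ContinuousWithinAt g (Icc a b) s' :=
      (hd s' ⟨has', hs'le⟩).continuousWithinAt
    have hgs' : g s' ∈ Metric.ball x r := by
      rw [Metric.mem_ball, dist_eq_norm]
      exact hball' s' (right_mem_Icc.2 has')
    have hev : ∀ᶠ τ in nhdsWithin s' (Icc a b), g τ ∈ Metric.ball x r :=
      hcont (Metric.isOpen_ball.mem_nhds hgs')
    obtain ⟨ε', hε', hevent⟩ := Metric.eventually_nhds_iff.1 (eventually_nhdsWithin_iff.1 hev)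
    set t' := min b (s' + ε' / 2) with ht'
    have hs't' : s' < t' := lt_min hs'b (by linarith)
    have ht'S : t' ∈ S := by
      refine ⟨⟨has'.trans hs't'.le, min_le_left _ _⟩, fun τ hτ => ?_⟩
      rcases lt_or_ge τ s' with h1 | h1
      · have : g τ ∈ Metric.closedBall x r := by
          rw [Metric.mem_closedBall, dist_eq_norm]
          exact (hball' τ ⟨hτ.1, h1.le⟩).le
        exact this
      · have hd1 : dist τ s' < ε' := by
          rw [Real.dist_eq, abs_of_nonneg (by linarith)]
          have h3 : τ < s' + ε' / 2 := lt_of_lt_of_le hτ.2 (min_le_right _ _)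
          linarith
        have hτb : τ ∈ Icc a b := ⟨hτ.1, (hτ.2.le).trans (min_le_left _ _)⟩
        exact Metric.ball_subset_closedBall (hevent hd1 hτb)
    exact absurd (le_csSup hbdd ht'S) (not_le.2 hs't')
  intro t ht
  rw [Metric.mem_closedBall, dist_eq_norm]
  exact (hball' t (hsb ▸ ht)).le

/-- Uniform-time local existence near a compact subset of the domain. -/
lemma exists_ext {K : Set (Fin N → ℝ)} (hK : IsCompact K) (hKD : K ⊆ dom N) :
    ∃ ε > (0:ℝ), ∀ x ∈ K, ∀ t₀ : ℝ, ∃ g : ℝ → Fin N → ℝ, g t₀ = x ∧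
      (∀ t ∈ Icc t₀ (t₀ + ε), g t ∈ dom N) ∧
      ∀ t ∈ Icc t₀ (t₀ + ε), HasDerivWithinAt g (vf N (g t)) (Icc t₀ (t₀ + ε)) t := by
  rcases K.eq_empty_or_nonempty with hKe | hKne
  · exact ⟨1, one_pos, fun x hx => absurd hx (by simp [hKe])⟩
  obtain ⟨δ, hδ, hthick⟩ := hK.exists_thickening_subset_open isOpen_dom hKD
  set K' := Metric.cthickening (δ / 2) K with hK'def
  have hK'c : IsCompact K' := hK.cthickening
  have hK'D : K' ⊆ dom N :=
    (Metric.cthickening_subset_thickening' hδ (by linarith) K).trans hthick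
  have hcont : ContinuousOn (vf N) (dom N) := fun x hx =>
    (contDiffAt_vf hx).continuousAt.continuousWithinAt
  obtain ⟨C, hC⟩ := hK'c.exists_bound_of_continuousOn (hcont.mono hK'D)
  obtain ⟨z, hz⟩ := hKne
  have hC0 : 0 ≤ C :=
    le_trans (norm_nonneg _) (hC z (Metric.self_subset_cthickening K hz))
  obtain ⟨L, hL⟩ := lipschitzOnWith_of_compact hK'c isOpen_dom hK'D convex_dom
    (fun x hx => contDiffAt_vf hx)
  set ε := (δ / 2) / (C + 1) with hε
  have hε0 : 0 < ε := by positivity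
  refine ⟨ε, hε0, fun x hx t₀ => ?_⟩
  have hball : Metric.closedBall x (δ / 2) ⊆ K' := Metric.closedBall_subset_cthickening hx _
  have hCε : C * ε < δ / 2 := by
    rw [hε, mul_div_assoc']
    rw [div_lt_iff₀ (by positivity)]
    nlinarith
  have hδ2 : (((δ / 2).toNNReal : NNReal) : ℝ) = δ / 2 := Real.coe_toNNReal _ (by positivity)
  have hC' : ((C.toNNReal : NNReal) : ℝ) = C := Real.coe_toNNReal _ hC0
  have hpl : IsPicardLindelof (fun _ => vf N) (tmin := t₀) (tmax := t₀ + ε)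
      ⟨t₀, ⟨le_rfl, by linarith⟩⟩ x (δ / 2).toNNReal 0 C.toNNReal L :=
    { lipschitzOnWith := fun t _ => hL.mono (by rw [hδ2]; exact hball)
      continuousOn := fun _ _ => continuousOn_const
      norm_le := fun t _ y hy => by
        rw [hC']; rw [hδ2] at hy; exact hC y (hball hy)
      mul_max_le := by
        show ((C.toNNReal : NNReal) : ℝ) * max (t₀ + ε - t₀) (t₀ - t₀)
          ≤ (((δ / 2).toNNReal : NNReal) : ℝ) - ((0 : NNReal) : ℝ)
        rw [hC', hδ2, NNReal.coe_zero, sub_zero]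
        rw [show t₀ + ε - t₀ = ε by ring, sub_self, max_eq_left hε0.le]
        exact hCε.le }
  obtain ⟨g, hg0, hgd⟩ := hpl.exists_eq_forall_mem_Icc_hasDerivWithinAt₀
  have hmem : ∀ t ∈ Icc t₀ (t₀ + ε), g t ∈ Metric.closedBall x (δ / 2) := by
    refine bootstrap (by linarith) (by positivity) hC0 hgd
      (fun t ht hb => hC _ (hball hb)) hg0 ?_
    rw [show t₀ + ε - t₀ = ε by ring]
    exact hCε
  exact ⟨g, hg0, fun t ht => hK'D (hball (hmem t ht)), hgd⟩

/-- Gluing a solution with a local extension. -/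
lemma sol.glue {x₀ : Fin N → ℝ} {b c : ℝ} {f g : ℝ → Fin N → ℝ} (hf : sol N x₀ b f)
    (hb : 0 ≤ b) (hbc : b ≤ c) (hgb : g b = f b)
    (hgD : ∀ t ∈ Icc b c, g t ∈ dom N)
    (hg : ∀ t ∈ Icc b c, HasDerivWithinAt g (vf N (g t)) (Icc b c) t) :
    sol N x₀ c (fun t => if t ≤ b then f t else g t) := by
  set h : ℝ → Fin N → ℝ := fun t => if t ≤ b then f t else g t with hh
  have h0 : h 0 = x₀ := by simp only [hh, if_pos hb]; exact hf.1
  have hmem : ∀ t ∈ Icc (0:ℝ) c, h t ∈ dom N := by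
    intro t ht
    by_cases htb : t ≤ b
    · simpa only [hh, if_pos htb] using hf.2.1 t ⟨ht.1, htb⟩
    · simpa only [hh, if_neg htb] using hgD t ⟨le_of_lt (not_le.1 htb), ht.2⟩
  refine ⟨h0, hmem, fun t ht => ?_⟩
  have hIcc : Icc (0:ℝ) b ∪ Icc b c = Icc 0 c := Icc_union_Icc_eq_Icc hb hbc
  rcases lt_trichotomy t b with hlt | heq | hgt
  · have hd : HasDerivWithinAt f (vf N (f t)) (Icc 0 c) t := by
      refine (hf.2.2 t ⟨ht.1, hlt.le⟩).mono_of_mem_nhdsWithin ?_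
      have hsub : Icc (0:ℝ) c ∩ Iio b ⊆ Icc 0 b := fun y hy => ⟨hy.1.1, le_of_lt (Set.mem_Iio.1 hy.2)⟩
      exact Filter.mem_of_superset (inter_mem_nhdsWithin _ (Iio_mem_nhds hlt)) hsub
    have heqn : h =ᶠ[nhdsWithin t (Icc (0:ℝ) c)] f := by
      refine Filter.eventuallyEq_of_mem (inter_mem_nhdsWithin _ (Iio_mem_nhds hlt)) ?_
      intro y hy
      simp only [hh, if_pos (le_of_lt (Set.mem_Iio.1 hy.2))]
    have hres := hd.congr_of_eventuallyEq heqn (by simp only [hh, if_pos hlt.le])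
    have hval : h t = f t := by simp only [hh, if_pos hlt.le]
    rw [hval]
    exact hres
  · subst heq
    have hval : h t = f t := by simp only [hh, if_pos le_rfl]
    have hvalg : g t = f t := hgb
    have hcongrf : ∀ y ∈ Icc (0:ℝ) t, h y = f y := fun y hy => by
      simp only [hh, if_pos hy.2]
    have hcongr : ∀ y ∈ Icc t c, h y = g y := by
      intro y hy
      by_cases hyb : y ≤ t
      · have hyt : y = t := le_antisymm hyb hy.1
        rw [hyt]
        simp only [hh, if_pos le_rfl]
        exact hvalg.symm
      · simp only [hh, if_neg hyb]
    have hdf : HasDerivWithinAt h (vf N (f t)) (Icc 0 t) t :=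
      (hf.2.2 t (right_mem_Icc.2 hb)).congr hcongrf (hcongrf t (right_mem_Icc.2 hb))
    have hdg0 : HasDerivWithinAt h (vf N (g t)) (Icc t c) t :=
      (hg t (left_mem_Icc.2 hbc)).congr hcongr (hcongr t (left_mem_Icc.2 hbc))
    have hdg : HasDerivWithinAt h (vf N (f t)) (Icc t c) t := by rwa [hvalg] at hdg0
    have hun := hdf.union hdg
    rw [hIcc] at hun
    rwa [hval]
  · have hd : HasDerivWithinAt g (vf N (g t)) (Icc 0 c) t := by
      refine (hg t ⟨hgt.le, ht.2⟩).mono_of_mem_nhdsWithin ?_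
      have hsub : Icc (0:ℝ) c ∩ Ioi b ⊆ Icc b c := fun y hy => ⟨le_of_lt (Set.mem_Ioi.1 hy.2), hy.1.2⟩
      exact Filter.mem_of_superset (inter_mem_nhdsWithin _ (Ioi_mem_nhds hgt)) hsub
    have heqn : h =ᶠ[nhdsWithin t (Icc (0:ℝ) c)] g := by
      refine Filter.eventuallyEq_of_mem (inter_mem_nhdsWithin _ (Ioi_mem_nhds hgt)) ?_
      intro y hy
      simp only [hh, if_neg (not_le.2 (Set.mem_Ioi.1 hy.2))]
    have hres := hd.congr_of_eventuallyEq heqn (by simp only [hh, if_neg (not_le.2 hgt)])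
    have hval : h t = g t := by simp only [hh, if_neg (not_le.2 hgt)]
    rw [hval]
    exact hres

/-- Global existence. -/
lemma sol_exists (hN : 2 ≤ N) {x₀ : Fin N → ℝ} (hx₀ : x₀ ∈ dom N) {T : ℝ} (hT : 0 ≤ T) :
    ∃ f, sol N x₀ T f := by
  have hN1 : 1 ≤ N := by omega
  have hNR : (2:ℝ) ≤ (N:ℝ) := by exact_mod_cast hN
  have hsum0 : (0:ℝ) ≤ ∑ i : Fin N, (x₀ i) ^ 2 := Finset.sum_nonneg fun i _ => sq_nonneg _
  set R2 := (∑ i : Fin N, (x₀ i) ^ 2) + 2 * ((N:ℝ) * ((N:ℝ) - 1)) * T with hR2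
  have hNN0 : (0:ℝ) ≤ 2 * ((N:ℝ) * ((N:ℝ) - 1)) * T :=
    mul_nonneg (by nlinarith) hT
  have hR2nn : 0 ≤ R2 := by rw [hR2]; linarith
  set r := Real.sqrt R2 with hrdef
  have hr0 : 0 ≤ r := Real.sqrt_nonneg _
  have hrb : ∀ x : Fin N → ℝ, (∑ i : Fin N, (x i) ^ 2) ≤ R2 → ∀ i, |x i| ≤ r := by
    intro x hx i
    have h1 : (x i) ^ 2 ≤ R2 :=
      le_trans (Finset.single_le_sum (f := fun i => (x i) ^ 2)
        (fun j _ => sq_nonneg _) (Finset.mem_univ i)) hx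
    have h2 := Real.sqrt_le_sqrt h1
    rwa [Real.sqrt_sq_eq_abs] at h2
  set c := Real.log (2 * r + 2) with hcdef
  have hc0 : 0 ≤ c := by rw [hcdef]; apply Real.log_nonneg; linarith
  have hterm : ∀ x : Fin N → ℝ, x ∈ dom N → (∑ i : Fin N, (x i) ^ 2) ≤ R2 →
      ∀ i j : Fin N, i ≠ j → Real.log (x i - x j) ≤ c ∧ Real.log (x i + x j) ≤ c := by
    intro x hxD hxs i j hij
    obtain ⟨hd, hs⟩ := dom_ne hxD hij
    have hi := hrb x hxs i
    have hj := hrb x hxs j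
    have hbd : |x i - x j| ≤ 2 * r + 2 := by
      have h1 : |x i - x j| ≤ |x i| + |x j| := by
        rw [sub_eq_add_neg]
        calc |x i + -x j| ≤ |x i| + |-x j| := abs_add_le _ _
          _ = |x i| + |x j| := by rw [abs_neg]
      linarith
    have hbd2 : |x i + x j| ≤ 2 * r + 2 := by
      have h1 : |x i + x j| ≤ |x i| + |x j| := abs_add_le _ _
      linarith
    constructor
    · rw [← Real.log_abs]
      exact Real.log_le_log (abs_pos.2 hd) hbd
    · rw [← Real.log_abs]
      exact Real.log_le_log (abs_pos.2 hs) hbd2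
  set L0 := lyap N x₀ with hL0
  set δ := Real.exp (L0 - 2 * (N:ℝ) ^ 2 * c) with hδdef
  have hδ0 : 0 < δ := Real.exp_pos _
  set Ktrap := {x : Fin N → ℝ | (∑ i : Fin N, (x i) ^ 2) ≤ R2 ∧
    ∀ i j : Fin N, i < j → δ ≤ x i - x j ∧ δ ≤ x i + x j} with hKt
  have hKsubD : Ktrap ⊆ dom N := fun x hx i j hij =>
    ⟨by linarith [(hx.2 i j hij).1], by linarith [(hx.2 i j hij).2]⟩
  have hKcl : IsClosed Ktrap := by
    rw [hKt, Set.setOf_and]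
    refine IsClosed.inter (isClosed_le (by continuity) continuous_const) ?_
    have heq : {x : Fin N → ℝ | ∀ i j : Fin N, i < j → δ ≤ x i - x j ∧ δ ≤ x i + x j}
        = ⋂ (i : Fin N) (j : Fin N),
          {x : Fin N → ℝ | i < j → δ ≤ x i - x j ∧ δ ≤ x i + x j} := by
      ext x; simp [Set.mem_iInter]
    rw [heq]
    refine isClosed_iInter fun i => isClosed_iInter fun j => ?_
    by_cases hij : i < j
    · simp only [hij, true_implies, Set.setOf_and]
      exact IsClosed.inter
        (isClosed_le continuous_const ((continuous_apply i).sub (continuous_apply j)))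
        (isClosed_le continuous_const ((continuous_apply i).add (continuous_apply j)))
    · simp only [hij, false_implies, Set.setOf_true]
      exact isClosed_univ
  have hKbd : Ktrap ⊆ Metric.closedBall 0 r := by
    intro x hx
    rw [Metric.mem_closedBall, dist_zero_right]
    refine (pi_norm_le_iff_of_nonneg hr0).2 fun i => ?_
    rw [Real.norm_eq_abs]
    exact hrb x hx.1 i
  have hKcomp : IsCompact Ktrap :=
    Metric.isCompact_of_isClosed_isBounded hKcl (Metric.isBounded_closedBall.subset hKbd)
  have hKmem : ∀ x : Fin N → ℝ, x ∈ dom N → (∑ i : Fin N, (x i) ^ 2) ≤ R2 →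
      L0 ≤ lyap N x → x ∈ Ktrap := by
    intro x hxD hxs hly
    refine ⟨hxs, fun i j hij => ?_⟩
    obtain ⟨h1, h2⟩ := lyap_extract hxD hc0 hly (hterm _ hxD hxs) i j hij
    obtain ⟨hgt1, hgt2⟩ := hxD i j hij
    constructor
    · calc δ = Real.exp (L0 - 2 * (N:ℝ) ^ 2 * c) := rfl
        _ ≤ Real.exp (Real.log (x i - x j)) := Real.exp_le_exp.2 h1
        _ = x i - x j := Real.exp_log (by linarith)
    · calc δ = Real.exp (L0 - 2 * (N:ℝ) ^ 2 * c) := rfl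
        _ ≤ Real.exp (Real.log (x i + x j)) := Real.exp_le_exp.2 h2
        _ = x i + x j := Real.exp_log (by linarith)
  have hapriori : ∀ s ∈ Icc (0:ℝ) T, ∀ f, sol N x₀ s f → ∀ t ∈ Icc (0:ℝ) s, f t ∈ Ktrap := by
    intro s hs f hf t ht
    have hsq := apriori_sq hf t ht
    have hDt := hf.2.1 t ht
    have hsq' : (∑ i : Fin N, (f t i) ^ 2) ≤ R2 := by
      rw [hsq, hR2]
      have h1 : 2 * ((N:ℝ) * ((N:ℝ) - 1)) * t ≤ 2 * ((N:ℝ) * ((N:ℝ) - 1)) * T :=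
        mul_le_mul_of_nonneg_left (le_trans ht.2 hs.2) (by nlinarith)
      linarith
    exact hKmem _ hDt hsq' (apriori_lyap hf t ht)
  have hx₀K : x₀ ∈ Ktrap := by
    refine hKmem _ hx₀ ?_ le_rfl
    rw [hR2]; linarith
  obtain ⟨ε, hε0, hext⟩ := exists_ext hKcomp hKsubD
  have hind : ∀ n : ℕ, ∃ f, sol N x₀ (min ((n:ℝ) * ε) T) f := by
    intro n
    induction n with
    | zero =>
      have h00 : min (((0:ℕ):ℝ) * ε) T = 0 := by
        rw [Nat.cast_zero, zero_mul]
        exact min_eq_left hT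
      rw [h00]
      refine ⟨fun _ => x₀, rfl, fun t _ => hx₀, fun t ht => ?_⟩
      have ht0 : t = 0 := le_antisymm ht.2 ht.1
      subst ht0
      rw [Set.Icc_self]
      rw [hasDerivWithinAt_iff_tendsto_slope]
      simp
    | succ n ih =>
      obtain ⟨f, hf⟩ := ih
      set s := min ((n:ℝ) * ε) T with hsdef
      have hs0 : 0 ≤ s := le_min (by positivity) hT
      have hsT : s ≤ T := min_le_right _ _
      have hfsK : f s ∈ Ktrap := hapriori s ⟨hs0, hsT⟩ f hf s (right_mem_Icc.2 hs0)
      obtain ⟨g, hg0, hgD, hgd⟩ := hext (f s) hfsK s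
      have hglue := hf.glue hs0 (by linarith : s ≤ s + ε) hg0 hgD hgd
      have hfin : min (((n+1:ℕ):ℝ) * ε) T ≤ s + ε := by
        rcases le_total ((n:ℝ) * ε) T with h | h
        · rw [hsdef, min_eq_left h]
          calc min (((n+1:ℕ):ℝ) * ε) T ≤ ((n+1:ℕ):ℝ) * ε := min_le_left _ _
            _ = (n:ℝ) * ε + ε := by push_cast; ring
        · rw [hsdef, min_eq_right h]
          calc min (((n+1:ℕ):ℝ) * ε) T ≤ T := min_le_right _ _
            _ ≤ T + ε := by linarith
      exact ⟨_, hglue.mono (le_min (by positivity) hT) hfin⟩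
  obtain ⟨n, hn⟩ := exists_nat_ge (T / ε)
  obtain ⟨f, hf⟩ := hind n
  have hmin : min ((n:ℝ) * ε) T = T := by
    refine min_eq_right ?_
    rw [div_le_iff₀ hε0] at hn
    linarith
  exact ⟨f, hmin ▸ hf⟩

end Stmt13

/-- Existence and uniqueness of the solution of the ODE of type `D_N`
starting at a point in the interior of the Weyl chamber, staying in the
interior for all times `t ≥ 0`. -/
theorem statement13 (N : ℕ) (hN : 2 ≤ N) (x₀ : Fin N → ℝ) (hx₀ : interiorD x₀) :
    ∃ φ : ℝ → Fin N → ℝ,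
      (φ 0 = x₀ ∧ (∀ t ∈ Set.Ici (0:ℝ), interiorD (φ t)) ∧ solvesD φ) ∧
      (∀ ψ : ℝ → Fin N → ℝ,
        (ψ 0 = x₀ ∧ (∀ t ∈ Set.Ici (0:ℝ), interiorD (ψ t)) ∧ solvesD ψ) →
        ∀ t ∈ Set.Ici (0:ℝ), ψ t = φ t) := by
  classical
  have hx₀' : x₀ ∈ Stmt13.dom N := (Stmt13.interiorD_iff hN).1 hx₀
  have hex : ∀ T : ℝ, ∃ f, Stmt13.sol N x₀ (max T 0) f :=
    fun T => Stmt13.sol_exists hN hx₀' (le_max_right T 0)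
  set g : ℝ → ℝ → Fin N → ℝ := fun T => Classical.choose (hex T) with hg
  have hgsol : ∀ T, Stmt13.sol N x₀ (max T 0) (g T) := fun T => Classical.choose_spec (hex T)
  have hcons : ∀ T T' : ℝ, ∀ t : ℝ, 0 ≤ t → t ≤ max T 0 → t ≤ max T' 0 → g T t = g T' t := by
    intro T T' t ht h1 h2
    have hm0 : 0 ≤ min (max T 0) (max T' 0) := le_min (le_max_right _ _) (le_max_right _ _)
    have := Stmt13.sol_unique hm0 ((hgsol T).mono hm0 (min_le_left _ _))
      ((hgsol T').mono hm0 (min_le_right _ _))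
    exact this ⟨ht, le_min h1 h2⟩
  set φ : ℝ → Fin N → ℝ := fun t => g (t + 1) t with hφ
  have hagree : ∀ T : ℝ, ∀ t : ℝ, 0 ≤ t → t + 1 ≤ max T 0 → φ t = g T t := by
    intro T t ht h1
    refine hcons (t + 1) T t ht ?_ (by linarith)
    exact le_trans (by linarith) (le_max_left _ _)
  have hφ0 : φ 0 = x₀ := by
    show g (0 + 1) 0 = x₀
    have := (hgsol (0 + 1)).1
    exact this
  have hφdom : ∀ t : ℝ, 0 ≤ t → φ t ∈ Stmt13.dom N := by
    intro t ht
    exact (hgsol (t + 1)).2.1 t ⟨ht, le_trans (by linarith) (le_max_left _ _)⟩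
  have hφder : ∀ t ∈ Set.Ici (0:ℝ), HasDerivWithinAt φ (Stmt13.vf N (φ t)) (Set.Ici 0) t := by
    intro t ht
    have ht0 : (0:ℝ) ≤ t := ht
    have htm : max (t + 2) 0 = t + 2 := max_eq_left (by linarith)
    have hder := (hgsol (t + 2)).2.2 t ⟨ht0, by rw [htm]; linarith⟩
    rw [htm] at hder
    have h1 : HasDerivWithinAt (g (t + 2)) (Stmt13.vf N (g (t + 2) t)) (Set.Ici 0) t := by
      refine hder.mono_of_mem_nhdsWithin ?_
      refine Filter.mem_of_superset
        (inter_mem_nhdsWithin _ (Iio_mem_nhds (show t < t + 2 by linarith))) ?_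
      exact fun y hy => ⟨hy.1, le_of_lt (Set.mem_Iio.1 hy.2)⟩
    have heqn : φ =ᶠ[nhdsWithin t (Set.Ici 0)] g (t + 2) := by
      refine Filter.eventuallyEq_of_mem
        (inter_mem_nhdsWithin _ (Iio_mem_nhds (show t < t + 1 by linarith))) ?_
      intro y hy
      refine hagree (t + 2) y hy.1 ?_
      rw [htm]
      have := Set.mem_Iio.1 hy.2
      linarith
    have hval : φ t = g (t + 2) t := hagree (t + 2) t ht0 (by rw [htm]; linarith)
    have hres := h1.congr_of_eventuallyEq heqn hval
    rwa [hval]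
  refine ⟨φ, ⟨hφ0, ?_, ?_⟩, ?_⟩
  · intro t ht
    exact (Stmt13.interiorD_iff hN).2 (hφdom t ht)
  · intro t ht i
    exact hasDerivWithinAt_pi.1 (hφder t ht) i
  · rintro ψ ⟨hψ0, hψD, hψs⟩ t ht
    have ht0 : (0:ℝ) ≤ t := ht
    set b := t + 1 with hbdef
    have hb0 : 0 ≤ b := by rw [hbdef]; linarith
    have hψsol : Stmt13.sol N x₀ b ψ := by
      refine ⟨hψ0, fun τ hτ => (Stmt13.interiorD_iff hN).1 (hψD τ hτ.1), fun τ hτ => ?_⟩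
      have hv : HasDerivWithinAt ψ (Stmt13.vf N (ψ τ)) (Set.Ici 0) τ :=
        hasDerivWithinAt_pi.2 fun i => hψs τ hτ.1 i
      exact hv.mono fun y hy => hy.1
    have hφsol : Stmt13.sol N x₀ b φ := by
      have hgm : max (b + 1) 0 = b + 1 := max_eq_left (by linarith)
      have hgs := (hgsol (b + 1)).mono hb0 (by rw [hgm]; linarith)
      refine hgs.congr hb0 ?_
      intro y hy
      refine (hagree (b + 1) y hy.1 ?_).symm
      rw [hgm]
      have := hy.2
      linarith
    exact Stmt13.sol_unique hb0 hψsol hφsol ⟨ht0, by rw [hbdef]; linarith⟩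

end
end

section
/- Let N ≥ 2 and let z_1 > z_2 > … > z_{N−1} > 0 be real numbers that are precisely the zeros of the Laguerre polynomial L_{N−1}^{(1)}. Define r ∈ ℝ^N by r_i := √(2 z_i) for i = 1,…,N−1 and r_N := 0. Then for every c > 0 the function φ(t) := √(t + c²) · r on [0,∞) takes values in the interior of C_N^D, satisfies φ(0) = c·r, and solves the ODE of type D_N: φ_i'(t) = ∑_{j≠i} ( 1/(φ_i(t) − φ_j(t)) + 1/(φ_i(t) + φ_j(t)) ) for all i and all t ≥ 0. -/
open scoped BigOperators

noncomputable section

/-- The `n`-th Laguerre polynomial `L_n^{(α)}` (as a function). -/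
def laguerre (n : ℕ) (α : ℝ) (x : ℝ) : ℝ :=
  ∑ k ∈ Finset.range (n+1),
    ((∏ m ∈ Finset.range (n - k), (α + k + m + 1)) / (Nat.factorial (n - k))) *
      ((-x)^k / (Nat.factorial k))

section aux
open Polynomial

def lagPoly (n : ℕ) (α : ℝ) : Polynomial ℝ :=
  ∑ k ∈ Finset.range (n+1),
    Polynomial.C (((∏ m ∈ Finset.range (n - k), (α + k + m + 1)) / (Nat.factorial (n - k))) *
      ((-1)^k / (Nat.factorial k))) * Polynomial.X ^ k

lemma laguerre_eval (n : ℕ) (α x : ℝ) : laguerre n α x = (lagPoly n α).eval x := by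
  unfold laguerre lagPoly
  rw [Polynomial.eval_finset_sum]
  refine Finset.sum_congr rfl fun k _ => ?_
  rw [Polynomial.eval_mul, Polynomial.eval_C, Polynomial.eval_pow, Polynomial.eval_X, neg_pow]
  ring

lemma lagPoly_coeff (n : ℕ) (α : ℝ) (k : ℕ) :
    (lagPoly n α).coeff k = if k ≤ n then
      ((∏ m ∈ Finset.range (n - k), (α + k + m + 1)) / (Nat.factorial (n - k))) *
      ((-1)^k / (Nat.factorial k)) else 0 := by
  unfold lagPoly
  rw [Polynomial.finset_sum_coeff]
  simp only [Polynomial.coeff_C_mul, Polynomial.coeff_X_pow]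
  simp only [mul_ite, mul_one, mul_zero]
  rw [Finset.sum_ite_eq (Finset.range (n+1)) k]
  simp [Nat.lt_succ_iff]

lemma lagPoly_rec (n : ℕ) (α : ℝ) (k : ℕ) :
    ((k:ℝ)+1) * (α + k + 1) * (lagPoly n α).coeff (k+1) + ((n:ℝ) - k) * (lagPoly n α).coeff k = 0 := by
  rcases lt_trichotomy k n with h | h | h
  · have hk1 : k + 1 ≤ n := h
    rw [lagPoly_coeff, lagPoly_coeff, if_pos hk1, if_pos h.le]
    obtain ⟨d, hd⟩ : ∃ d, n - k = d + 1 := ⟨n - k - 1, by omega⟩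
    have hd2 : n - (k+1) = d := by omega
    have hnk : (n:ℝ) - k = (d:ℝ) + 1 := by
      have : (n:ℝ) = ((n - k : ℕ) : ℝ) + k := by
        push_cast [Nat.cast_sub h.le]; ring
      rw [this, hd]; push_cast; ring
    rw [hd, hd2, hnk]
    rw [Finset.prod_range_succ']
    have hcongr : (∏ m ∈ Finset.range d, (α + ↑k + ↑(m+1) + 1)) =
        ∏ m ∈ Finset.range d, (α + ↑(k+1) + ↑m + 1) := by
      refine Finset.prod_congr rfl fun m _ => ?_
      push_cast; ring
    rw [hcongr]
    have hK : ((Nat.factorial k : ℝ)) ≠ 0 := Nat.cast_ne_zero.mpr (Nat.factorial_ne_zero k)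
    have hF : ((Nat.factorial d : ℝ)) ≠ 0 := Nat.cast_ne_zero.mpr (Nat.factorial_ne_zero d)
    rw [Nat.factorial_succ d, Nat.factorial_succ k]
    push_cast
    field_simp
    ring
  · subst h
    rw [lagPoly_coeff, lagPoly_coeff, if_neg (by omega), if_pos le_rfl]
    simp
  · rw [lagPoly_coeff, lagPoly_coeff, if_neg (by omega), if_neg (by omega)]
    simp

lemma lagPoly_ode (n : ℕ) (α : ℝ) :
    Polynomial.X * Polynomial.derivative (Polynomial.derivative (lagPoly n α)) +
      (Polynomial.C (α+1) - Polynomial.X) * Polynomial.derivative (lagPoly n α) +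
      Polynomial.C (n:ℝ) * lagPoly n α = 0 := by
  ext k
  simp only [Polynomial.coeff_add, sub_mul, Polynomial.coeff_sub, Polynomial.coeff_C_mul,
    Polynomial.coeff_zero]
  cases k with
  | zero =>
      simp only [Polynomial.mul_coeff_zero, Polynomial.coeff_X_zero, zero_mul,
        Polynomial.coeff_derivative]
      have := lagPoly_rec n α 0
      push_cast at this ⊢
      linarith
  | succ k =>
      simp only [Polynomial.coeff_X_mul, Polynomial.coeff_derivative]
      have := lagPoly_rec n α (k+1)
      push_cast at this ⊢
      nlinarith [this]

section roots
variable {n : ℕ} (w : Fin n → ℝ)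

lemma derivative_finset_prod {ι : Type*} [DecidableEq ι] (s : Finset ι) (f : ι → Polynomial ℝ) :
    Polynomial.derivative (∏ i ∈ s, f i) =
      ∑ i ∈ s, (∏ j ∈ s.erase i, f j) * Polynomial.derivative (f i) := by
  induction s using Finset.induction_on with
  | empty => simp
  | @insert a s ha ih =>
      rw [Finset.prod_insert ha, Polynomial.derivative_mul, ih, Finset.sum_insert ha,
        Finset.erase_insert ha]
      rw [Finset.mul_sum]
      congr 1
      · ring
      refine Finset.sum_congr rfl fun i hi => ?_
      have hai : a ≠ i := fun h => ha (h ▸ hi)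
      rw [Finset.erase_insert_of_ne hai,
        Finset.prod_insert (fun h => ha (Finset.mem_of_mem_erase h)), mul_assoc]

def rootProd : Polynomial ℝ := ∏ j : Fin n, (Polynomial.X - Polynomial.C (w j))

lemma rootProd_deriv :
    Polynomial.derivative (rootProd w) =
      ∑ a : Fin n, ∏ j ∈ Finset.univ.erase a, (Polynomial.X - Polynomial.C (w j)) := by
  rw [rootProd, derivative_finset_prod]
  refine Finset.sum_congr rfl fun a _ => ?_
  simp

lemma rootProd_deriv_eval (hw : Function.Injective w) (i : Fin n) :
    (Polynomial.derivative (rootProd w)).eval (w i) =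
      ∏ j ∈ Finset.univ.erase i, (w i - w j) := by
  rw [rootProd_deriv, Polynomial.eval_finset_sum]
  rw [Finset.sum_eq_single i]
  · simp [Polynomial.eval_prod]
  · intro a _ ha
    rw [Polynomial.eval_prod]
    refine Finset.prod_eq_zero (Finset.mem_erase.mpr ⟨ha.symm, Finset.mem_univ i⟩) ?_
    simp
  · simp

lemma rootProd_deriv2_eval (hw : Function.Injective w) (i : Fin n) :
    (Polynomial.derivative (Polynomial.derivative (rootProd w))).eval (w i) =
      2 * ∑ j ∈ Finset.univ.erase i,
            ∏ k ∈ (Finset.univ.erase i).erase j, (w i - w k) := by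
  rw [rootProd_deriv]
  rw [map_sum, Polynomial.eval_finset_sum]
  have hterm : ∀ a : Fin n,
      (Polynomial.derivative (∏ j ∈ Finset.univ.erase a,
        (Polynomial.X - Polynomial.C (w j)))).eval (w i) =
      ∑ b ∈ Finset.univ.erase a,
        ∏ k ∈ (Finset.univ.erase a).erase b, (w i - w k) := by
    intro a
    rw [derivative_finset_prod, Polynomial.eval_finset_sum]
    refine Finset.sum_congr rfl fun b _ => ?_
    simp [Polynomial.eval_prod]
  simp only [hterm]
  rw [← Finset.add_sum_erase _ _ (Finset.mem_univ i)]
  have h2 : ∑ a ∈ Finset.univ.erase i, (∑ b ∈ (Finset.univ.erase a),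
      ∏ k ∈ (Finset.univ.erase a).erase b, (w i - w k)) =
      ∑ a ∈ Finset.univ.erase i,
        ∏ k ∈ (Finset.univ.erase i).erase a, (w i - w k) := by
    refine Finset.sum_congr rfl fun a ha => ?_
    have hai : a ≠ i := (Finset.mem_erase.mp ha).1
    rw [Finset.sum_eq_single i]
    · rw [Finset.erase_right_comm]
    · intro b hb hbi
      refine Finset.prod_eq_zero (Finset.mem_erase.mpr ⟨hbi.symm,
        Finset.mem_erase.mpr ⟨hai.symm, Finset.mem_univ i⟩⟩) ?_
      simp
    · intro h
      exact absurd (Finset.mem_erase.mpr ⟨hai.symm, Finset.mem_univ i⟩) h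
  rw [h2]; ring

lemma sum_inv_mul_prod (hw : Function.Injective w) (i : Fin n) :
    (∑ j ∈ Finset.univ.erase i, (w i - w j)⁻¹) *
      ∏ j ∈ Finset.univ.erase i, (w i - w j) =
    ∑ j ∈ Finset.univ.erase i,
      ∏ k ∈ (Finset.univ.erase i).erase j, (w i - w k) := by
  rw [Finset.sum_mul]
  refine Finset.sum_congr rfl fun j hj => ?_
  have hji : j ≠ i := (Finset.mem_erase.mp hj).1
  rw [← Finset.mul_prod_erase _ _ hj, ← mul_assoc,
    inv_mul_cancel₀ (sub_ne_zero.mpr (hw.ne (Ne.symm hji))), one_mul]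

lemma prod_sub_ne_zero (hw : Function.Injective w) (i : Fin n) :
    ∏ j ∈ Finset.univ.erase i, (w i - w j) ≠ 0 := by
  rw [Finset.prod_ne_zero_iff]
  intro j hj
  exact sub_ne_zero.mpr (hw.ne (Ne.symm (Finset.mem_erase.mp hj).1))

end roots

lemma lagPoly_factor {n : ℕ} (hn : 0 < n) (z : Fin n → ℝ) (hinj : Function.Injective z)
    (hzero : ∀ i, (lagPoly n 1).eval (z i) = 0) :
    lagPoly n 1 = Polynomial.C ((lagPoly n 1).coeff n) * rootProd z := by
  set c := (lagPoly n 1).coeff n with hc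
  set q := lagPoly n 1 - Polynomial.C c * rootProd z with hq
  have hmonic : (rootProd z).Monic :=
    Polynomial.monic_prod_of_monic _ _ (fun j _ => Polynomial.monic_X_sub_C (z j))
  have hdeg : (rootProd z).natDegree = n := by
    rw [rootProd, Polynomial.natDegree_prod]
    · simp
    · intro j _; exact Polynomial.X_sub_C_ne_zero (z j)
  have hcoeffzero : ∀ m : ℕ, n ≤ m → q.coeff m = 0 := by
    intro m hm
    rw [hq, Polynomial.coeff_sub, Polynomial.coeff_C_mul]
    rcases eq_or_lt_of_le hm with h | h
    · have h1 : (rootProd z).coeff m = 1 := by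
        have h2 := hmonic.coeff_natDegree
        rw [hdeg] at h2
        rw [← h]; exact h2
      rw [h1, mul_one, ← h]
      exact sub_self c
    · rw [lagPoly_coeff, if_neg (by omega),
        Polynomial.coeff_eq_zero_of_natDegree_lt (by rw [hdeg]; exact h), mul_zero, sub_self]
  have hqz : q = 0 := by
    refine Polynomial.eq_zero_of_natDegree_lt_card_of_eval_eq_zero q hinj (fun i => ?_) ?_
    · rw [hq, Polynomial.eval_sub, Polynomial.eval_mul, hzero, rootProd,
        Polynomial.eval_prod]
      rw [Finset.prod_eq_zero (Finset.mem_univ i) (by simp)]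
      ring
    · rw [Fintype.card_fin]
      by_cases h0 : q = 0
      · rw [h0]; simpa using hn
      · exact (Polynomial.natDegree_lt_iff_degree_lt h0).mpr
          ((Polynomial.degree_lt_iff_coeff_zero q n).mpr hcoeffzero)
  exact sub_eq_zero.mp hqz

lemma electrostatic {n : ℕ} (hn : 0 < n) (z : Fin n → ℝ) (hinj : Function.Injective z)
    (hzpos : ∀ i, 0 < z i) (hzero : ∀ i, (lagPoly n 1).eval (z i) = 0) (i : Fin n) :
    ∑ j ∈ Finset.univ.erase i, (z i - z j)⁻¹ = (z i - 2) / (2 * z i) := by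
  have hfac := lagPoly_factor hn z hinj hzero
  set c := (lagPoly n 1).coeff n with hc
  have hcne : c ≠ 0 := by
    rw [hc, lagPoly_coeff, if_pos le_rfl]
    simp [Nat.factorial_ne_zero]
  set p := rootProd z with hp
  have hode := lagPoly_ode n 1
  have hode2 := congrArg (Polynomial.eval (z i)) hode
  rw [hfac] at hode2
  simp only [Polynomial.derivative_mul, Polynomial.derivative_C, zero_mul, zero_add,
    Polynomial.eval_add, Polynomial.eval_mul, Polynomial.eval_sub, Polynomial.eval_X,
    Polynomial.eval_C, Polynomial.eval_zero] at hode2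
  have hpz : p.eval (z i) = 0 := by
    rw [hp, rootProd, Polynomial.eval_prod]
    exact Finset.prod_eq_zero (Finset.mem_univ i) (by simp)
  rw [hpz] at hode2
  set P := ∏ j ∈ Finset.univ.erase i, (z i - z j) with hP
  set S := ∑ j ∈ Finset.univ.erase i, ∏ k ∈ (Finset.univ.erase i).erase j, (z i - z k) with hS
  have hd1 : (Polynomial.derivative p).eval (z i) = P := rootProd_deriv_eval z hinj i
  have hd2 : (Polynomial.derivative (Polynomial.derivative p)).eval (z i) = 2 * S :=
    rootProd_deriv2_eval z hinj i
  rw [hd1, hd2] at hode2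
  have hPne : P ≠ 0 := prod_sub_ne_zero z hinj i
  have hkey : z i * (2 * S) + (2 - z i) * P = 0 := by
    have : z i * (c * (2 * S)) + (1 + 1 - z i) * (c * P) + (n:ℝ) * (c * 0) = 0 := by
      linarith [hode2]
    have h3 : c * (z i * (2 * S) + (2 - z i) * P) = 0 := by ring_nf; ring_nf at this; linarith
    exact (mul_eq_zero.mp h3).resolve_left hcne
  have hsum := sum_inv_mul_prod z hinj i
  rw [← hP, ← hS] at hsum
  have hzne : z i ≠ 0 := ne_of_gt (hzpos i)
  have hSolve : ∑ j ∈ Finset.univ.erase i, (z i - z j)⁻¹ = S / P := by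
    rw [← hsum]; field_simp
  rw [hSolve, div_eq_div_iff hPne (by positivity : (2:ℝ) * z i ≠ 0)]
  nlinarith [hkey]


end aux

/-- For `r_i = √(2 z_i)`, `i = 1,…,N-1`, `r_N = 0`, with `z` the vector of ordered
zeros of the Laguerre polynomial `L_{N-1}^{(1)}` and `c > 0`, `φ(t) = √(t + c²)·r`
solves the ODE of type `D_N`, starts at `c·r`, and stays in the interior of `C_N^D`. -/
theorem statement14 (N : ℕ) (hN : 2 ≤ N)
    (z : Fin (N - 1) → ℝ) (hz : StrictAnti z) (hzpos : ∀ i, 0 < z i)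
    (hzero : ∀ i, laguerre (N - 1) 1 (z i) = 0)
    (hall : ∀ w : ℝ, laguerre (N - 1) 1 w = 0 → ∃ i, w = z i)
    (r : Fin N → ℝ)
    (hr : ∀ i : Fin N, r i =
      if h : (i : ℕ) < N - 1 then Real.sqrt (2 * z ⟨i, h⟩) else 0)
    (c : ℝ) (hc : 0 < c) :
    (∀ t ∈ Set.Ici (0:ℝ), interiorD (fun i => Real.sqrt (t + c^2) * r i)) ∧
    ((fun i => Real.sqrt (0 + c^2) * r i) = fun i => c * r i) ∧
    solvesD (fun t i => Real.sqrt (t + c^2) * r i) := by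
  obtain ⟨m, rfl⟩ : ∃ m, N = m + 2 := ⟨N - 2, by omega⟩
  have hinj : Function.Injective z := hz.injective
  have hel : ∀ i : Fin (m+1), ∑ j ∈ Finset.univ.erase i, (z i - z j)⁻¹ =
      (z i - 2) / (2 * z i) :=
    electrostatic (Nat.succ_pos m) z hinj hzpos
      (fun i => by rw [← laguerre_eval]; exact hzero i)
  have hrlast : r (Fin.last (m+1)) = 0 := by
    rw [hr]; rw [dif_neg (by simp)]
  have hrcast : ∀ i' : Fin (m+1), r (Fin.castSucc i') = Real.sqrt (2 * z i') := by
    intro i'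
    rw [hr, dif_pos (by simpa using i'.isLt)]
    rfl
  have hrpos : ∀ i' : Fin (m+1), 0 < r (Fin.castSucc i') := by
    intro i'
    rw [hrcast]
    exact Real.sqrt_pos.mpr (by linarith [hzpos i'])
  have hrsq : ∀ i' : Fin (m+1), (r (Fin.castSucc i'))^2 = 2 * z i' := by
    intro i'
    rw [hrcast]
    exact Real.sq_sqrt (by linarith [hzpos i'])
  have hsum : ∀ i : Fin (m+2),
      ∑ j ∈ Finset.univ.erase i, (1 / (r i - r j) + 1 / (r i + r j)) = r i / 2 := by
    intro i
    induction i using Fin.lastCases with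
    | last =>
        rw [hrlast]
        rw [Finset.sum_eq_zero, zero_div]
        intro j hj
        simp [zero_sub, zero_add, inv_neg]
    | cast i' =>
        set a := r (Fin.castSucc i') with ha
        have ha2 : a^2 = 2 * z i' := hrsq i'
        have hapos : 0 < a := hrpos i'
        rw [Finset.sum_erase_eq_sub (Finset.mem_univ _)]
        rw [Fin.sum_univ_castSucc]
        have hterm : ∀ j' : Fin (m+1), j' ≠ i' →
            1 / (a - r (Fin.castSucc j')) + 1 / (a + r (Fin.castSucc j')) =
              a * (z i' - z j')⁻¹ := by
          intro j' hj'
          set b := r (Fin.castSucc j') with hb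
          have hb2 : b^2 = 2 * z j' := hrsq j'
          have hbpos : 0 < b := hrpos j'
          have hzne : z i' ≠ z j' := fun h => hj' (hinj h).symm
          have hab : a ≠ b := by
            intro h
            apply hzne
            have : a^2 = b^2 := by rw [h]
            rw [ha2, hb2] at this; linarith
          have h1 : a - b ≠ 0 := sub_ne_zero.mpr hab
          have h2 : a + b ≠ 0 := by positivity
          have h3 : z i' - z j' ≠ 0 := sub_ne_zero.mpr hzne
          field_simp
          nlinarith [ha2, hb2]
        have hinner : ∑ j' : Fin (m+1), (1 / (a - r (Fin.castSucc j')) +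
            1 / (a + r (Fin.castSucc j'))) =
            (1 / (a - a) + 1 / (a + a)) + a * ((z i' - 2) / (2 * z i')) := by
          rw [← Finset.add_sum_erase _ _ (Finset.mem_univ i')]
          congr 1
          rw [← hel i', Finset.mul_sum]
          refine Finset.sum_congr rfl fun j' hj' => hterm j' (Finset.mem_erase.mp hj').1
        rw [hinner, hrlast]
        have hzipos := hzpos i'
        rw [sub_self, div_zero, sub_zero, add_zero]
        rw [← ha]
        field_simp
        nlinarith [ha2, hapos]
  refine ⟨?_, ?_, ?_⟩
  · -- interiorD
    intro t ht
    have ht0 : (0:ℝ) ≤ t := ht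
    have htc : 0 < t + c^2 := by positivity
    have hs : 0 < Real.sqrt (t + c^2) := Real.sqrt_pos.mpr htc
    intro j k hjk
    have hjk' : (j:ℕ) < (k:ℕ) := hjk
    have hkle : (k:ℕ) ≤ m + 1 := Nat.lt_succ_iff.mp k.isLt
    have hj : (j:ℕ) < m + 2 - 1 := by omega
    have hjne : ¬ ((j:ℕ) = m + 2 - 1) := by omega
    simp only [hjne, if_false]
    have hrj : r j = Real.sqrt (2 * z ⟨j, hj⟩) := by rw [hr, dif_pos hj]
    have hrjpos : 0 < r j := by
      rw [hrj]; exact Real.sqrt_pos.mpr (by linarith [hzpos ⟨(j:ℕ), hj⟩])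
    by_cases hk : (k:ℕ) = m + 2 - 1
    · simp only [hk, if_true]
      have hrk : r k = 0 := by rw [hr, dif_neg (by omega)]
      rw [hrk, mul_zero, abs_zero]
      positivity
    · simp only [hk, if_false]
      have hk' : (k:ℕ) < m + 2 - 1 := by omega
      have hrk : r k = Real.sqrt (2 * z ⟨k, hk'⟩) := by rw [hr, dif_pos hk']
      have hzlt : z ⟨(k:ℕ), hk'⟩ < z ⟨(j:ℕ), hj⟩ := hz (by exact hjk')
      have : r k < r j := by
        rw [hrk, hrj]
        exact Real.sqrt_lt_sqrt (by linarith [hzpos ⟨(k:ℕ), hk'⟩]) (by linarith)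
      exact mul_lt_mul_of_pos_left this hs
  · funext i
    rw [zero_add, Real.sqrt_sq hc.le]
  · intro t ht i
    have ht0 : (0:ℝ) ≤ t := ht
    have htc : 0 < t + c^2 := by positivity
    set s := Real.sqrt (t + c^2) with hsdef
    have hs : 0 < s := Real.sqrt_pos.mpr htc
    have hderiv : HasDerivAt (fun u => Real.sqrt (u + c^2) * r i)
        (1 / (2 * s) * 1 * r i) t :=
      (((Real.hasDerivAt_sqrt htc.ne').comp t
        ((hasDerivAt_id t).add_const (c^2)))).mul_const (r i)
    have key : ∑ j ∈ Finset.univ.erase i,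
        (1 / (s * r i - s * r j) + 1 / (s * r i + s * r j)) = 1 / (2 * s) * 1 * r i := by
      have hterm : ∀ j, 1 / (s * r i - s * r j) + 1 / (s * r i + s * r j) =
          s⁻¹ * (1 / (r i - r j) + 1 / (r i + r j)) := by
        intro j
        rw [← mul_sub, ← mul_add]
        simp only [one_div, mul_inv]
        ring
      rw [Finset.sum_congr rfl (fun j _ => hterm j), ← Finset.mul_sum, hsum i]
      rw [one_div, mul_inv]
      ring
    have goal' : HasDerivWithinAt (fun u => Real.sqrt (u + c^2) * r i)
        (∑ j ∈ Finset.univ.erase i,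
          (1 / (s * r i - s * r j) + 1 / (s * r i + s * r j)))
        (Set.Ici 0) t := by
      rw [key]; exact hderiv.hasDerivWithinAt
    exact goal'
end
end

section
/- Let N ≥ 2, let x lie in the interior of C_N^D, and let φ : [0,∞) → ℝ^N be a continuously differentiable function taking values in the interior of C_N^D with φ(0) = x that solves the ODE of type D_N. Then for all t ≥ 0, ‖φ(t)‖² = 2N(N − 1)·t + ‖x‖², where ‖·‖ is the Euclidean norm on ℝ^N. -/
open scoped BigOperators

noncomputable section

/-- In the interior of the chamber, for `i < j` we have `y i - y j > 0` and `y i + y j > 0`. -/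
lemma interiorD_lt {N : ℕ} {y : Fin N → ℝ} (hy : interiorD y) {i j : Fin N} (hij : i < j) :
    0 < y i - y j ∧ 0 < y i + y j := by
  set g : Fin N → ℝ := fun j : Fin N => if (j : ℕ) = N - 1 then |y j| else y j with hg
  have hNpos : 0 < N := i.pos
  have hilt : (i : ℕ) < N - 1 := by
    have := j.isLt
    omega
  have hgi : g i = y i := by simp [hg, Nat.ne_of_lt hilt]
  by_cases hj : (j : ℕ) = N - 1
  · have h1 : g j < g i := hy hij
    rw [hgi] at h1
    simp only [hg, hj, if_pos] at h1
    constructor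
    · have := abs_nonneg (y j)
      have := le_abs_self (y j)
      linarith
    · have := neg_abs_le (y j)
      linarith
  · have hjlt : (j : ℕ) < N - 1 := by have := j.isLt; omega
    have hgj : g j = y j := by simp [hg, hj]
    have h1 : g j < g i := hy hij
    rw [hgi, hgj] at h1
    -- show y j > 0 using the last coordinate
    have hlast : N - 1 < N := by omega
    set l : Fin N := ⟨N - 1, hlast⟩ with hl
    have hjl : j < l := by
      rw [Fin.lt_def]
      exact hjlt
    have h2 : g l < g j := hy hjl
    rw [hgj] at h2
    simp only [hg, hl, if_pos] at h2
    have : 0 ≤ |y l| := abs_nonneg _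
    constructor <;> linarith

lemma interiorD_ne {N : ℕ} {y : Fin N → ℝ} (hy : interiorD y) {i j : Fin N} (hij : i ≠ j) :
    y i - y j ≠ 0 ∧ y i + y j ≠ 0 := by
  rcases lt_or_gt_of_ne hij with h | h
  · obtain ⟨h1, h2⟩ := interiorD_lt hy h
    constructor <;> intro hc <;> [skip; skip] <;> nlinarith [h1, h2]
  · obtain ⟨h1, h2⟩ := interiorD_lt hy h
    constructor <;> intro hc <;> nlinarith [h1, h2]

/-- The key algebraic identity. -/
lemma key_sum {N : ℕ} (y : Fin N → ℝ)
    (h : ∀ i j : Fin N, i ≠ j → y i - y j ≠ 0 ∧ y i + y j ≠ 0) :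
    ∑ i : Fin N, 2 * y i ^ 1 *
        ∑ j ∈ Finset.univ.erase i, (1 / (y i - y j) + 1 / (y i + y j))
      = 2 * (N : ℝ) * ((N : ℝ) - 1) := by
  set f : Fin N → Fin N → ℝ :=
    fun i j => 2 * y i ^ 1 * (1 / (y i - y j) + 1 / (y i + y j)) with hf
  have hS : ∀ i : Fin N,
      2 * y i ^ 1 * ∑ j ∈ Finset.univ.erase i, (1 / (y i - y j) + 1 / (y i + y j))
        = ∑ j ∈ Finset.univ.erase i, f i j := fun i => Finset.mul_sum _ _ _
  rw [Finset.sum_congr rfl fun i _ => hS i]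
  have hswap : (∑ i : Fin N, ∑ j ∈ Finset.univ.erase i, f j i)
      = ∑ i : Fin N, ∑ j ∈ Finset.univ.erase i, f i j :=
    Finset.sum_comm' (fun a b => by
      simp only [Finset.mem_univ, Finset.mem_erase, true_and, and_true]
      exact ⟨fun hb => hb.symm, fun ha => ha.symm⟩)
  have hdouble : (∑ i : Fin N, ∑ j ∈ Finset.univ.erase i, f i j)
        + (∑ i : Fin N, ∑ j ∈ Finset.univ.erase i, f i j)
      = ∑ i : Fin N, ∑ j ∈ Finset.univ.erase i, (f i j + f j i) := by
    nth_rewrite 2 [← hswap]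
    rw [← Finset.sum_add_distrib]
    exact Finset.sum_congr rfl fun i _ => (Finset.sum_add_distrib).symm
  have hterm : ∀ i j : Fin N, i ≠ j → f i j + f j i = 4 := by
    intro i j hij
    obtain ⟨h1, h2⟩ := h i j hij
    have h3 : y j - y i ≠ 0 := by intro hc; apply h1; linarith [sub_eq_zero.mp hc]
    have h4 : y j + y i ≠ 0 := by intro hc; apply h2; linarith
    simp only [hf, pow_one]
    field_simp
    ring
  have hcount : (∑ i : Fin N, ∑ j ∈ Finset.univ.erase i, f i j)
        + (∑ i : Fin N, ∑ j ∈ Finset.univ.erase i, f i j)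
      = (N : ℝ) * ((N : ℝ) - 1) * 4 := by
    rw [hdouble]
    have : ∀ i : Fin N, ∑ j ∈ Finset.univ.erase i, (f i j + f j i)
        = ((N : ℝ) - 1) * 4 := by
      intro i
      rw [Finset.sum_congr rfl (fun j hj => hterm i j
        (Ne.symm (Finset.ne_of_mem_erase hj)))]
      rw [Finset.sum_const, Finset.card_erase_of_mem (Finset.mem_univ i),
        Finset.card_univ, Fintype.card_fin]
      have hN1 : 1 ≤ N := Nat.one_le_iff_ne_zero.mpr (by
        rintro rfl; exact absurd i.isLt (by omega))
      rw [nsmul_eq_mul, Nat.cast_sub hN1]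
      push_cast
      ring
    rw [Finset.sum_congr rfl fun i _ => this i, Finset.sum_const, Finset.card_univ,
      Fintype.card_fin, nsmul_eq_mul]
    ring
  linarith

/-- Growth of the Euclidean norm along solutions of the ODE of type `D_N`:
`‖φ(t)‖² = 2N(N - 1)t + ‖x‖²`. -/
theorem statement15 (N : ℕ) (hN : 2 ≤ N) (x : Fin N → ℝ) (hx : interiorD x)
    (φ : ℝ → Fin N → ℝ) (hφ0 : φ 0 = x)
    (hint : ∀ t ∈ Set.Ici (0:ℝ), interiorD (φ t))
    (hode : solvesD φ) :
    ∀ t ∈ Set.Ici (0:ℝ),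
      ‖(WithLp.equiv 2 (Fin N → ℝ)).symm (φ t)‖^2
        = 2 * N * (N - 1) * t + ‖(WithLp.equiv 2 (Fin N → ℝ)).symm x‖^2 := by
  have hnorm : ∀ y : Fin N → ℝ,
      ‖(WithLp.equiv 2 (Fin N → ℝ)).symm y‖ ^ 2 = ∑ i : Fin N, y i ^ 2 := by
    intro y
    rw [EuclideanSpace.norm_eq, Real.sq_sqrt (Finset.sum_nonneg fun i _ => sq_nonneg _)]
    exact Finset.sum_congr rfl fun i _ => by
      simp [Real.norm_eq_abs, sq_abs]
  set c : ℝ := 2 * (N : ℝ) * ((N : ℝ) - 1) with hc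
  set g : ℝ → ℝ := fun s => ∑ i : Fin N, φ s i ^ 2 with hgdef
  have hgderiv : ∀ t ∈ Set.Ici (0:ℝ), HasDerivWithinAt g c (Set.Ici 0) t := by
    intro t ht
    have hsum : HasDerivWithinAt g
        (∑ i : Fin N, 2 * φ t i ^ 1 *
          ∑ j ∈ Finset.univ.erase i, (1 / (φ t i - φ t j) + 1 / (φ t i + φ t j)))
        (Set.Ici 0) t := by
      refine HasDerivWithinAt.fun_sum fun i _ => ?_
      have h1 := (hode t ht i).fun_pow 2
      simpa [mul_comm, mul_assoc, mul_left_comm] using h1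
    have heq : (∑ i : Fin N, 2 * φ t i ^ 1 *
        ∑ j ∈ Finset.univ.erase i, (1 / (φ t i - φ t j) + 1 / (φ t i + φ t j))) = c :=
      key_sum (φ t) fun i j hij => interiorD_ne (hint t ht) hij
    rwa [heq] at hsum
  -- the function s ↦ g s - c * s has zero derivative on Ici 0, hence is constant
  set h : ℝ → ℝ := fun s => g s - c * s with hhdef
  have hhderiv : ∀ t ∈ Set.Ici (0:ℝ), HasDerivWithinAt h 0 (Set.Ici 0) t := by
    intro t ht
    have := (hgderiv t ht).fun_sub ((hasDerivWithinAt_id t _).const_mul c)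
    simpa [hhdef, mul_one] using this
  have hconst : ∀ t ∈ Set.Ici (0:ℝ), h t = h 0 := by
    intro t ht
    have hfd : ∀ s ∈ Set.Ici (0:ℝ),
        HasFDerivWithinAt h (0 : ℝ →L[ℝ] ℝ) (Set.Ici 0) s := by
      intro s hs
      have h0 : (ContinuousLinearMap.smulRight (1 : ℝ →L[ℝ] ℝ) (0:ℝ)) = 0 := by
        ext z
        simp
      exact h0 ▸ (hhderiv s hs).hasFDerivWithinAt
    have hdiff : DifferentiableOn ℝ h (Set.Ici 0) :=
      fun s hs => (hfd s hs).differentiableWithinAt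
    refine (convex_Ici 0).is_const_of_fderivWithin_eq_zero hdiff ?_ ht (by
      simp [Set.mem_Ici])
    intro s hs
    exact (hfd s hs).fderivWithin (uniqueDiffOn_Ici 0 s hs)
  intro t ht
  have h1 := hconst t ht
  simp only [hhdef, hgdef, mul_zero, sub_zero] at h1
  rw [hφ0] at h1
  rw [hnorm, hnorm]
  rw [hc] at h1 ⊢
  linarith
end
end

section
/- Let N ≥ 2, let x lie in the interior of C_N^D with x_N = 0, and let φ : [0,∞) → ℝ^N be a continuously differentiable function taking values in the interior of C_N^D with φ(0) = x that solves the ODE of type D_N. Then φ_N(t) = 0 for all t ≥ 0, and the first N−1 components (φ_1,…,φ_{N−1}) take values in the interior of C_{N−1}^B, start at (x_1,…,x_{N−1}), and solve the ODE of type B_{N−1} with parameter ν = 2. -/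
open scoped BigOperators

noncomputable section

/-- The interior of the closed Weyl chamber of type B. -/
def interiorB {N : ℕ} (x : Fin N → ℝ) : Prop := StrictAnti x ∧ ∀ i, 0 < x i

/-- `φ` solves the ODE of type `B_N` with parameter `ν` on `[0,∞)`. -/
def solvesB {N : ℕ} (ν : ℝ) (φ : ℝ → Fin N → ℝ) : Prop :=
  ∀ t ∈ Set.Ici (0:ℝ), ∀ i : Fin N,
    HasDerivWithinAt (fun s => φ s i)
      ((∑ j ∈ Finset.univ.erase i,
          (1 / (φ t i - φ t j) + 1 / (φ t i + φ t j))) + ν / φ t i)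
      (Set.Ici 0) t

/-- If a solution of the ODE of type `D_N` starts at a point of the interior of
`C_N^D` with last coordinate `0`, then the last coordinate stays `0`, and the
first `N-1` components solve the ODE of type `B_{N-1}` with parameter `ν = 2`,
staying in the interior of `C_{N-1}^B`. -/
theorem statement16 (N : ℕ) (hN : 2 ≤ N) (x : Fin N → ℝ) (hx : interiorD x)
    (hxN : x ⟨N - 1, by omega⟩ = 0)
    (φ : ℝ → Fin N → ℝ) (hφ0 : φ 0 = x)
    (hint : ∀ t ∈ Set.Ici (0:ℝ), interiorD (φ t))
    (hode : solvesD φ) :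
    (∀ t ∈ Set.Ici (0:ℝ), φ t ⟨N - 1, by omega⟩ = 0) ∧
    (∀ t ∈ Set.Ici (0:ℝ),
      interiorB (fun i : Fin (N - 1) => φ t (Fin.castLE (Nat.sub_le N 1) i))) ∧
    ((fun i : Fin (N - 1) => φ 0 (Fin.castLE (Nat.sub_le N 1) i))
      = fun i : Fin (N - 1) => x (Fin.castLE (Nat.sub_le N 1) i)) ∧
    solvesB 2 (fun t (i : Fin (N - 1)) => φ t (Fin.castLE (Nat.sub_le N 1) i)) := by
  have hN1 : N - 1 < N := by omega
  set L : Fin N := ⟨N - 1, hN1⟩ with hLdef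
  -- For any time t ≥ 0 and any index j ≠ L, we have |φ t L| < φ t j
  have hgt : ∀ t ∈ Set.Ici (0:ℝ), ∀ j : Fin N, j ≠ L → |φ t L| < φ t j := by
    intro t ht j hj
    have hsa := hint t ht
    have hjv : (j : ℕ) ≠ N - 1 := by
      intro h; exact hj (Fin.ext h)
    have hjlt : j < L := by
      have := j.isLt
      exact Fin.lt_def.2 (by simp only [hLdef]; omega)
    have h := hsa hjlt
    simpa [hLdef, hjv] using h
  -- the squared last coordinate
  set u : ℝ → ℝ := fun s => (φ s L) ^ 2 with hudef
  have hu' : ∀ t ∈ Set.Ici (0:ℝ),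
      HasDerivWithinAt u ((2:ℕ) * φ t L ^ 1 *
        (∑ j ∈ Finset.univ.erase L,
          (1 / (φ t L - φ t j) + 1 / (φ t L + φ t j)))) (Set.Ici 0) t := by
    intro t ht
    exact (hode t ht L).pow 2
  have hnonpos : ∀ t ∈ Set.Ici (0:ℝ),
      (2:ℕ) * φ t L ^ 1 *
        (∑ j ∈ Finset.univ.erase L,
          (1 / (φ t L - φ t j) + 1 / (φ t L + φ t j))) ≤ 0 := by
    intro t ht
    have key : φ t L * (∑ j ∈ Finset.univ.erase L,
        (1 / (φ t L - φ t j) + 1 / (φ t L + φ t j))) ≤ 0 := by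
      rw [Finset.mul_sum]
      apply Finset.sum_nonpos
      intro j hj
      have hjL : j ≠ L := (Finset.mem_erase.1 hj).1
      have habs := hgt t ht j hjL
      set f := φ t L
      set c := φ t j
      have ha : f - c < 0 := by
        have : f ≤ |f| := le_abs_self f
        linarith
      have hb : 0 < f + c := by
        have : -f ≤ |f| := neg_le_abs f
        linarith
      have heq : f * (1 / (f - c) + 1 / (f + c))
          = (2 * f ^ 2) / ((f - c) * (f + c)) := by
        field_simp [ha.ne, hb.ne']
        ring
      rw [heq]
      apply div_nonpos_of_nonneg_of_nonpos
      · positivity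
      · exact le_of_lt (mul_neg_of_neg_of_pos ha hb)
    calc (2:ℕ) * φ t L ^ 1 * (∑ j ∈ Finset.univ.erase L,
          (1 / (φ t L - φ t j) + 1 / (φ t L + φ t j)))
        = 2 * (φ t L * (∑ j ∈ Finset.univ.erase L,
          (1 / (φ t L - φ t j) + 1 / (φ t L + φ t j)))) := by push_cast; ring
      _ ≤ 0 := by linarith
  have hcont : ContinuousOn u (Set.Ici 0) := fun t ht =>
    (hu' t ht).continuousWithinAt
  have hderivAt : ∀ t ∈ interior (Set.Ici (0:ℝ)),
      HasDerivAt u ((2:ℕ) * φ t L ^ 1 *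
        (∑ j ∈ Finset.univ.erase L,
          (1 / (φ t L - φ t j) + 1 / (φ t L + φ t j)))) t := by
    intro t ht
    rw [interior_Ici] at ht
    exact (hu' t (Set.mem_Ici.2 (le_of_lt (Set.mem_Ioi.1 ht)))).hasDerivAt (Ici_mem_nhds ht)
  have hanti : AntitoneOn u (Set.Ici 0) := by
    apply antitoneOn_of_deriv_nonpos (convex_Ici 0) hcont
    · intro t ht
      exact (hderivAt t ht).differentiableAt.differentiableWithinAt
    · intro t ht
      rw [(hderivAt t ht).deriv]
      exact hnonpos t (by rw [interior_Ici] at ht; exact Set.mem_Ici.2 (le_of_lt (Set.mem_Ioi.1 ht)))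
  have hu0 : u 0 = 0 := by
    simp only [hudef, hφ0]
    rw [show x L = 0 from hxN]
    norm_num
  have hzero : ∀ t ∈ Set.Ici (0:ℝ), φ t L = 0 := by
    intro t ht
    have h1 : u t ≤ 0 := by
      have := hanti (Set.self_mem_Ici) ht ht
      rwa [hu0] at this
    have h2 : 0 ≤ u t := sq_nonneg _
    have h3 : u t = 0 := le_antisymm h1 h2
    exact pow_eq_zero_iff (n := 2) (by norm_num) |>.1 h3
  -- positivity of the first N-1 coordinates
  have hcast_ne : ∀ i : Fin (N - 1), (Fin.castLE (Nat.sub_le N 1) i : Fin N) ≠ L := by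
    intro i h
    have := congrArg Fin.val h
    simp only [Fin.castLE, hLdef] at this
    have := i.isLt
    omega
  have hpos : ∀ t ∈ Set.Ici (0:ℝ), ∀ i : Fin (N - 1),
      0 < φ t (Fin.castLE (Nat.sub_le N 1) i) := by
    intro t ht i
    have h := hgt t ht _ (hcast_ne i)
    exact lt_of_le_of_lt (abs_nonneg _) h
  -- interiorB
  have hintB : ∀ t ∈ Set.Ici (0:ℝ),
      interiorB (fun i : Fin (N - 1) => φ t (Fin.castLE (Nat.sub_le N 1) i)) := by
    intro t ht
    constructor
    · intro i j hij
      have hsa := hint t ht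
      have h := hsa (show (Fin.castLE (Nat.sub_le N 1) i : Fin N)
          < Fin.castLE (Nat.sub_le N 1) j from hij)
      have hiv : ((i : ℕ)) ≠ N - 1 := by
        have := i.isLt; omega
      have hjv : ((j : ℕ)) ≠ N - 1 := by
        have := j.isLt; omega
      simpa [Fin.coe_castLE, hiv, hjv] using h
    · exact hpos t ht
  -- the ODE of type B
  have hODE : solvesB 2 (fun t (i : Fin (N - 1)) =>
      φ t (Fin.castLE (Nat.sub_le N 1) i)) := by
    intro t ht i
    set I : Fin N := Fin.castLE (Nat.sub_le N 1) i with hIdef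
    have hIL : I ≠ L := hcast_ne i
    have hLmem : L ∈ Finset.univ.erase I :=
      Finset.mem_erase.2 ⟨Ne.symm hIL, Finset.mem_univ _⟩
    have hset : (Finset.univ.erase I).erase L
        = (Finset.univ.erase i).map (Fin.castLEEmb (Nat.sub_le N 1)) := by
      ext k
      simp only [Finset.mem_erase, Finset.mem_univ, and_true, Finset.mem_map,
        Fin.castLEEmb_apply]
      constructor
      · rintro ⟨hkL, hkI⟩
        have hk1 : (k : ℕ) < N - 1 := by
          have h1 := k.isLt
          have h2 : (k : ℕ) ≠ N - 1 := fun h => hkL (Fin.ext h)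
          omega
        refine ⟨⟨(k : ℕ), hk1⟩, ?_, Fin.ext rfl⟩
        intro h
        apply hkI
        apply Fin.ext
        have := congrArg Fin.val h
        simpa [hIdef, Fin.castLE] using this
      · rintro ⟨j, hji, rfl⟩
        constructor
        · intro h
          have := congrArg Fin.val h
          simp only [Fin.castLE, hLdef] at this
          have := j.isLt; omega
        · intro h
          apply hji
          apply Fin.ext
          have := congrArg Fin.val h
          simpa [hIdef, Fin.castLE] using this
    have hsplit : (∑ j ∈ Finset.univ.erase I,
          (1 / (φ t I - φ t j) + 1 / (φ t I + φ t j)))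
        = (∑ j ∈ Finset.univ.erase i,
            (1 / (φ t I - φ t (Fin.castLE (Nat.sub_le N 1) j))
              + 1 / (φ t I + φ t (Fin.castLE (Nat.sub_le N 1) j))))
          + 2 / φ t I := by
      rw [← Finset.add_sum_erase _ _ hLmem, hset, Finset.sum_map]
      rw [hzero t ht]
      simp only [Fin.castLEEmb_apply, sub_zero, add_zero]
      rw [add_comm]
      congr 1
      rw [← add_div]
      norm_num
    have hd := hode t ht I
    rw [hsplit] at hd
    exact hd
  refine ⟨?_, hintB, by rw [hφ0], hODE⟩
  intro t ht
  exact hzero t ht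
end
end

section
/- Let N ≥ 1, let A ∈ ℝ^{N×N} be a real symmetric matrix such that E − A has eigenvalues 1, 2, …, N (counted with multiplicity), let λ ∈ ℝ with λ ≠ 0, and let c > 0 and t > 0. Then (noting that g(s) := e^{2λs} − 1 + λc² is nonzero of constant sign on [0,t] and the ratios g(t)/g(s) and λc²/g(t) are positive) ∫₀ᵗ e^{−2λ(t−s)} · exp( ln( (e^{2λt} − 1 + λc²)/(e^{2λs} − 1 + λc²) ) · A ) ds = ((1 + e^{−2λt}(λc² − 1))/(2λ)) · (E − A)⁻¹ · ( E − exp( ln( λc²/(e^{2λt} − 1 + λc²) ) · (E − A) ) ). -/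
open scoped BigOperators
open Polynomial

noncomputable section

private lemma Gpos18 (lam c : ℝ) (hlam : lam ≠ 0) (hc : 0 < c) :
    ∀ s : ℝ, 0 ≤ s → 0 < lam * (Real.exp (2*lam*s) - 1 + lam*c^2) := by
  intro s hs
  have hc2 : 0 < c^2 := pow_pos hc 2
  rcases hlam.lt_or_gt with h | h
  · have h1 : Real.exp (2*lam*s) ≤ 1 := Real.exp_le_one_iff.mpr (by nlinarith)
    nlinarith [mul_pos (mul_pos_of_neg_of_neg h h) hc2,
      mul_nonneg (neg_nonneg.mpr h.le) (sub_nonneg.mpr h1)]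
  · have h1 : 1 ≤ Real.exp (2*lam*s) := Real.one_le_exp_iff.mpr (by nlinarith)
    nlinarith [mul_pos (mul_pos h h) hc2, mul_nonneg h.le (sub_nonneg.mpr h1)]

private lemma intg18 (lam c t : ℝ) (hlam : lam ≠ 0) (hc : 0 < c) (ht : 0 < t) (a x y : ℝ) :
    IntervalIntegrable (fun s =>
      Real.exp (-2*lam*(t-s)) *
        (x * Real.exp (Real.log ((Real.exp (2*lam*t) - 1 + lam*c^2)
          / (Real.exp (2*lam*s) - 1 + lam*c^2)) * a) * y)) MeasureTheory.volume 0 t := by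
  apply ContinuousOn.intervalIntegrable
  have hIcc : Set.uIcc (0:ℝ) t = Set.Icc 0 t := Set.uIcc_of_le ht.le
  have hGne : ∀ s ∈ Set.uIcc (0:ℝ) t, Real.exp (2*lam*s) - 1 + lam*c^2 ≠ 0 := by
    intro s hs
    rw [hIcc] at hs
    have := Gpos18 lam c hlam hc s hs.1
    intro h; rw [h] at this; simp at this
  have hGt : Real.exp (2*lam*t) - 1 + lam*c^2 ≠ 0 := by
    have := Gpos18 lam c hlam hc t ht.le
    intro h; rw [h] at this; simp at this
  have hG : ContinuousOn (fun s => Real.exp (2*lam*s) - 1 + lam*c^2) (Set.uIcc (0:ℝ) t) :=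
    (((Real.continuous_exp.comp (by fun_prop)).sub continuous_const).add continuous_const).continuousOn
  apply ContinuousOn.mul
  · exact (Real.continuous_exp.comp (by fun_prop)).continuousOn
  apply ContinuousOn.mul
  apply ContinuousOn.mul continuousOn_const
  · apply Real.continuous_exp.comp_continuousOn
    apply ContinuousOn.mul _ continuousOn_const
    apply ContinuousOn.log (continuousOn_const.div hG hGne)
    intro s hs
    exact div_ne_zero hGt (hGne s hs)
  · exact continuousOn_const

private lemma scalar18 (lam c t : ℝ) (hlam : lam ≠ 0) (hc : 0 < c) (ht : 0 < t)
    (a : ℝ) (ha : a ≠ 1) :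
    ∫ s in (0:ℝ)..t,
      Real.exp (-2*lam*(t - s)) *
        Real.exp (Real.log ((Real.exp (2*lam*t) - 1 + lam*c^2)
          / (Real.exp (2*lam*s) - 1 + lam*c^2)) * a)
    = ((1 + Real.exp (-2*lam*t) * (lam*c^2 - 1))/(2*lam)) *
        ((1-a)⁻¹ * (1 - Real.exp (Real.log (lam*c^2
          / (Real.exp (2*lam*t) - 1 + lam*c^2)) * (1-a)))) := by
  set G : ℝ → ℝ := fun s => Real.exp (2*lam*s) - 1 + lam*c^2 with hGdef
  have hIcc : Set.uIcc (0:ℝ) t = Set.Icc 0 t := Set.uIcc_of_le ht.le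
  have hGne : ∀ s, 0 ≤ s → G s ≠ 0 := by
    intro s hs h
    have := Gpos18 lam c hlam hc s hs
    simp only [hGdef] at h; rw [h] at this; simp at this
  have hGt : G t ≠ 0 := hGne t ht.le
  have h1a : (1:ℝ) - a ≠ 0 := sub_ne_zero.mpr (Ne.symm ha)
  have h2lam : (2:ℝ)*lam ≠ 0 := by simp [hlam]
  -- antiderivative
  set H : ℝ → ℝ := fun s =>
    Real.exp (-(2*lam*t)) / (2*lam*(1-a)) * (G s * Real.exp (Real.log (G t * (G s)⁻¹) * a))
    with hHdef
  have hderiv : ∀ s ∈ Set.uIcc (0:ℝ) t, HasDerivAt H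
      (Real.exp (-2*lam*(t - s)) * Real.exp (Real.log (G t / G s) * a)) s := by
    intro s hs
    rw [hIcc] at hs
    have hGs : G s ≠ 0 := hGne s hs.1
    have hd1 : HasDerivAt (fun u : ℝ => 2*lam*u) (2*lam) s := by
      simpa using (hasDerivAt_id s).const_mul (2*lam)
    have hG' : HasDerivAt G (Real.exp (2*lam*s) * (2*lam)) s := by
      exact ((hd1.exp).sub_const 1).add_const (lam*c^2)
    have hratio : HasDerivAt (fun u => G t * (G u)⁻¹)
        (G t * (-(Real.exp (2*lam*s) * (2*lam)) / (G s)^2)) s :=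
      (hG'.inv hGs).const_mul (G t)
    have hratne : G t * (G s)⁻¹ ≠ 0 := mul_ne_zero hGt (inv_ne_zero hGs)
    have hlog : HasDerivAt (fun u => Real.log (G t * (G u)⁻¹) * a)
        ((G t * (-(Real.exp (2*lam*s) * (2*lam)) / (G s)^2)) / (G t * (G s)⁻¹) * a) s :=
      (hratio.log hratne).mul_const a
    have hin : HasDerivAt (fun u => G u * Real.exp (Real.log (G t * (G u)⁻¹) * a))
        (Real.exp (2*lam*s) * (2*lam) * Real.exp (Real.log (G t * (G s)⁻¹) * a)
          + G s * (Real.exp (Real.log (G t * (G s)⁻¹) * a) *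
            ((G t * (-(Real.exp (2*lam*s) * (2*lam)) / (G s)^2)) / (G t * (G s)⁻¹) * a))) s :=
      hG'.mul hlog.exp
    have := hin.const_mul (Real.exp (-(2*lam*t)) / (2*lam*(1-a)))
    refine this.congr_deriv ?_
    have hdiv : G t / G s = G t * (G s)⁻¹ := div_eq_mul_inv _ _
    rw [hdiv]
    have hexps : Real.exp (-2*lam*(t-s)) = Real.exp (-(2*lam*t)) * Real.exp (2*lam*s) := by
      rw [← Real.exp_add]; ring_nf
    rw [hexps]
    field_simp
    ring
  have hint := intg18 lam c t hlam hc ht a 1 1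
  simp only [one_mul, mul_one] at hint
  have heq := intervalIntegral.integral_eq_sub_of_hasDerivAt hderiv hint
  rw [heq]
  -- now compute H t - H 0
  have hG0 : G 0 = lam*c^2 := by simp [hGdef]
  have hc2 : lam*c^2 ≠ 0 := by
    have := Gpos18 lam c hlam hc 0 le_rfl
    simp at this
    intro h; rw [h] at this; simp at this
  have hratpos : 0 < lam*c^2 / G t := by
    have h1 := Gpos18 lam c hlam hc 0 le_rfl
    simp at h1
    have h2 := Gpos18 lam c hlam hc t ht.le
    rw [show lam*c^2 / G t = (lam*(lam*c^2)) / (lam * G t) by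
      rw [mul_div_mul_left _ _ hlam]]
    exact div_pos h1 h2
  have hexpu : Real.exp (Real.log (lam*c^2) - Real.log (G t)) = lam*c^2 / G t := by
    rw [← Real.log_div hc2 hGt]
    exact Real.exp_log hratpos
  have hlog1 : Real.log (lam*c^2 / G t) = Real.log (lam*c^2) - Real.log (G t) :=
    Real.log_div hc2 hGt
  have hHt : H t = Real.exp (-(2*lam*t)) / (2*lam*(1-a)) * G t := by
    rw [hHdef]
    simp only []
    rw [mul_inv_cancel₀ hGt, Real.log_one, zero_mul, Real.exp_zero, mul_one]
  have hH0 : H 0 = Real.exp (-(2*lam*t)) / (2*lam*(1-a)) *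
      ((lam*c^2) * Real.exp ((Real.log (G t) - Real.log (lam*c^2)) * a)) := by
    rw [hHdef]
    simp only []
    rw [hG0, Real.log_mul hGt (inv_ne_zero hc2), Real.log_inv]
    rw [show Real.log (G t) + -Real.log (lam*c^2)
        = Real.log (G t) - Real.log (lam*c^2) by ring]
  rw [hHt, hH0, hlog1]
  have hCt : 1 + Real.exp (-2*lam*t) * (lam*c^2 - 1) = Real.exp (-(2*lam*t)) * G t := by
    have h1 : Real.exp (-(2*lam*t)) * Real.exp (2*lam*t) = 1 := by
      rw [← Real.exp_add]; simp
    rw [show (-2*lam*t) = -(2*lam*t) by ring, hGdef]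
    simp only []
    nlinarith [h1]
  rw [hCt]
  set u : ℝ := Real.log (lam*c^2) - Real.log (G t) with hu
  have hexpu2 : Real.exp (u * (1 - a)) = (lam*c^2 / G t) * Real.exp (-(u*a)) := by
    rw [show u * (1-a) = u + -(u*a) by ring, Real.exp_add, hexpu]
  have hexpmu : Real.exp ((Real.log (G t) - Real.log (lam*c^2)) * a) = Real.exp (-(u*a)) := by
    rw [show (Real.log (G t) - Real.log (lam*c^2)) * a = -(u*a) by rw [hu]; ring]
  rw [hexpu2, hexpmu]
  field_simp

/-- For a real symmetric `N×N` matrix `A` such that `E - A` has eigenvalues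
`1, 2, …, N` (counted with multiplicity, expressed via the characteristic
polynomial), `λ ≠ 0`, `c > 0` and `t > 0`, with `g(s) = e^{2λs} - 1 + λc²`,
the entrywise integral `∫₀ᵗ e^{-2λ(t-s)}·exp(ln(g(t)/g(s))·A) ds` equals
`((1 + e^{-2λt}(λc² - 1))/(2λ))·(E-A)⁻¹·(E - exp(ln(λc²/g(t))·(E-A)))`. -/
theorem statement18 (N : ℕ) (hN : 1 ≤ N) (A : Matrix (Fin N) (Fin N) ℝ)
    (hsymm : A.IsSymm)
    (heig : (1 - A).charpoly
      = ∏ k ∈ Finset.range N, (X - C ((k : ℝ) + 1)))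
    (lam : ℝ) (hlam : lam ≠ 0) (c t : ℝ) (hc : 0 < c) (ht : 0 < t) :
    (Matrix.of fun i j =>
        ∫ s in (0:ℝ)..t,
          Real.exp (-2*lam*(t - s)) *
            (NormedSpace.exp
              (Real.log ((Real.exp (2*lam*t) - 1 + lam*c^2)
                / (Real.exp (2*lam*s) - 1 + lam*c^2)) • A)) i j)
      = ((1 + Real.exp (-2*lam*t) * (lam*c^2 - 1))/(2*lam)) •
        ((1 - A)⁻¹ *
          (1 - NormedSpace.exp
            (Real.log (lam*c^2 / (Real.exp (2*lam*t) - 1 + lam*c^2)) • (1 - A)))) := by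
  classical
  have hA : A.IsHermitian := by
    rw [Matrix.IsHermitian, Matrix.conjTranspose_eq_transpose_of_trivial]; exact hsymm
  set P : Matrix (Fin N) (Fin N) ℝ := (hA.eigenvectorUnitary : Matrix (Fin N) (Fin N) ℝ)
    with hPdef
  set Q : Matrix (Fin N) (Fin N) ℝ := star P with hQdef
  set μ : Fin N → ℝ := hA.eigenvalues with hμdef
  have hspec : A = P * Matrix.diagonal μ * Q := by
    have := hA.spectral_theorem
    simpa [hPdef, hQdef, hμdef] using this
  have hPQ : P * Q = 1 := Matrix.mem_unitaryGroup_iff.mp hA.eigenvectorUnitary.2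
  have hQP : Q * P = 1 := Matrix.mem_unitaryGroup_iff'.mp hA.eigenvectorUnitary.2
  have hPinv : P⁻¹ = Q := Matrix.inv_eq_right_inv hPQ
  have hPunit : IsUnit P := ⟨⟨P, Q, hPQ, hQP⟩, rfl⟩
  -- helper: conjugated diagonal product
  have hmulPQ : ∀ d e : Fin N → ℝ,
      (P * Matrix.diagonal d * Q) * (P * Matrix.diagonal e * Q)
        = P * Matrix.diagonal (fun k => d k * e k) * Q := by
    intro d e
    calc (P * Matrix.diagonal d * Q) * (P * Matrix.diagonal e * Q)
        = P * (Matrix.diagonal d * ((Q * P) * (Matrix.diagonal e * Q))) := by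
          simp only [Matrix.mul_assoc]
      _ = P * (Matrix.diagonal d * Matrix.diagonal e) * Q := by
          rw [hQP, one_mul]; simp only [Matrix.mul_assoc]
      _ = P * Matrix.diagonal (fun k => d k * e k) * Q := by
          rw [Matrix.diagonal_mul_diagonal]
  have hsubPQ : ∀ d e : Fin N → ℝ,
      (P * Matrix.diagonal d * Q) - (P * Matrix.diagonal e * Q)
        = P * Matrix.diagonal (fun k => d k - e k) * Q := by
    intro d e
    rw [← Matrix.sub_mul, ← Matrix.mul_sub, Matrix.diagonal_sub]
  have hone : (1 : Matrix (Fin N) (Fin N) ℝ)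
      = P * Matrix.diagonal (fun _ => (1:ℝ)) * Q := by
    rw [Matrix.diagonal_one, mul_one, hPQ]
  have hsmulPQ : ∀ (r : ℝ) (d : Fin N → ℝ),
      r • (P * Matrix.diagonal d * Q) = P * Matrix.diagonal (fun k => r * d k) * Q := by
    intro r d
    rw [← Matrix.smul_mul, ← Matrix.mul_smul, ← Matrix.diagonal_smul]
    rfl
  have hconjexp : ∀ d : Fin N → ℝ,
      NormedSpace.exp (P * Matrix.diagonal d * Q)
        = P * Matrix.diagonal (fun k => Real.exp (d k)) * Q := by
    intro d
    rw [← hPinv, Matrix.exp_conj P _ hPunit, Matrix.exp_diagonal, Pi.exp_def]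
    simp [← Real.exp_eq_exp_ℝ]
  have hexpA : ∀ r : ℝ, NormedSpace.exp (r • A)
      = P * Matrix.diagonal (fun k => Real.exp (r * μ k)) * Q := by
    intro r
    rw [hspec, hsmulPQ, hconjexp]
  have h1A : 1 - A = P * Matrix.diagonal (fun k => 1 - μ k) * Q := by
    conv_lhs => rw [hspec, hone]
    rw [hsubPQ]
  -- eigenvalues ≠ 1
  have hdet : (1 - A).det = ∏ k, (1 - μ k) := by
    rw [h1A, Matrix.det_mul, Matrix.det_mul, Matrix.det_diagonal, mul_comm P.det,
      mul_assoc, ← Matrix.det_mul, hPQ, Matrix.det_one, mul_one]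
  have hdetne : (1 - A).det ≠ 0 := by
    rw [Matrix.det_eq_sign_charpoly_coeff, heig, Polynomial.coeff_zero_eq_eval_zero,
      Polynomial.eval_prod]
    simp only [Polynomial.eval_sub, Polynomial.eval_X, Polynomial.eval_C, zero_sub]
    apply mul_ne_zero (pow_ne_zero _ (by norm_num))
    apply Finset.prod_ne_zero_iff.mpr
    intro k _
    have : (0:ℝ) < (k:ℝ) + 1 := by positivity
    intro h; rw [neg_eq_zero] at h; linarith
  have hprodne : (∏ k, ((1:ℝ) - μ k)) ≠ 0 := hdet ▸ hdetne
  have hne1 : ∀ k, (1:ℝ) - μ k ≠ 0 := fun k =>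
    Finset.prod_ne_zero_iff.mp hprodne k (Finset.mem_univ k)
  have hinv : (1 - A)⁻¹ = P * Matrix.diagonal (fun k => (1 - μ k)⁻¹) * Q := by
    apply Matrix.inv_eq_right_inv
    rw [h1A, hmulPQ]
    rw [show (fun k => (1 - μ k) * (1 - μ k)⁻¹) = fun _ => (1:ℝ) from
      funext fun k => mul_inv_cancel₀ (hne1 k)]
    rw [← hone]
  -- abbreviations
  set q : ℝ := Real.log (lam*c^2 / (Real.exp (2*lam*t) - 1 + lam*c^2)) with hqdef
  set C : ℝ := (1 + Real.exp (-2*lam*t) * (lam*c^2 - 1))/(2*lam) with hCdef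
  have hsmul1A : q • (1 - A) = P * Matrix.diagonal (fun k => q * (1 - μ k)) * Q := by
    rw [h1A, hsmulPQ]
  have hRHS : C • ((1 - A)⁻¹ * (1 - NormedSpace.exp (q • (1 - A))))
      = P * Matrix.diagonal
          (fun k => C * ((1 - μ k)⁻¹ * (1 - Real.exp (q * (1 - μ k))))) * Q := by
    rw [hsmul1A, hconjexp, hinv]
    conv_lhs => rw [hone]
    rw [hsubPQ, hmulPQ, hsmulPQ]
  rw [hRHS]
  -- entrywise
  ext i j
  have hentry : ∀ (v : Fin N → ℝ), (P * Matrix.diagonal v * Q) i j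
      = ∑ k, P i k * v k * Q k j := by
    intro v
    rw [Matrix.mul_apply]
    exact Finset.sum_congr rfl fun k _ => by rw [Matrix.mul_diagonal]
  rw [Matrix.of_apply]
  simp only [hexpA, hentry]
  calc (∫ s in (0:ℝ)..t, Real.exp (-2*lam*(t - s)) *
          ∑ k, P i k * Real.exp (Real.log ((Real.exp (2*lam*t) - 1 + lam*c^2)
            / (Real.exp (2*lam*s) - 1 + lam*c^2)) * μ k) * Q k j)
      = ∫ s in (0:ℝ)..t, ∑ k, Real.exp (-2*lam*(t - s)) *
          (P i k * Real.exp (Real.log ((Real.exp (2*lam*t) - 1 + lam*c^2)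
            / (Real.exp (2*lam*s) - 1 + lam*c^2)) * μ k) * Q k j) := by
        simp_rw [Finset.mul_sum]
    _ = ∑ k, ∫ s in (0:ℝ)..t, Real.exp (-2*lam*(t - s)) *
          (P i k * Real.exp (Real.log ((Real.exp (2*lam*t) - 1 + lam*c^2)
            / (Real.exp (2*lam*s) - 1 + lam*c^2)) * μ k) * Q k j) :=
        intervalIntegral.integral_finset_sum
          (fun k _ => intg18 lam c t hlam hc ht (μ k) (P i k) (Q k j))
    _ = ∑ k, P i k * (C * ((1 - μ k)⁻¹ * (1 - Real.exp (q * (1 - μ k))))) * Q k j := by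
        apply Finset.sum_congr rfl
        intro k _
        have h1 : (∫ s in (0:ℝ)..t, Real.exp (-2*lam*(t - s)) *
            (P i k * Real.exp (Real.log ((Real.exp (2*lam*t) - 1 + lam*c^2)
              / (Real.exp (2*lam*s) - 1 + lam*c^2)) * μ k) * Q k j))
            = (P i k * Q k j) * ∫ s in (0:ℝ)..t, Real.exp (-2*lam*(t - s)) *
              Real.exp (Real.log ((Real.exp (2*lam*t) - 1 + lam*c^2)
                / (Real.exp (2*lam*s) - 1 + lam*c^2)) * μ k) := by
          rw [← intervalIntegral.integral_const_mul]
          apply intervalIntegral.integral_congr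
          intro s _
          ring
        rw [h1, scalar18 lam c t hlam hc ht (μ k)
          (fun h => hne1 k (by rw [h]; ring))]
        rw [hCdef, hqdef]
        ring

end
end
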